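/- arXiv:1504.02701 — 3 statements merged into one kernel-verified Lean document; each statement's English description precedes it below -/
import Mathlib

section
/- Let X be a Banach space with a tight by support basis, and let T be a bounded operator on a block subspace [x_n] of X such that supp(T x_n) ∩ supp(x_m) = ∅ for all n ≠ m. Then T = D|_{[x_n]} + S with D: X → X a bounded diagonal operator and S a bounded strictly singular operator. -/
open scoped BigOperators Classical
open Filter Topology

structure SchauderBasis' (X : Type*) [NormedAddCommGroup X] [NormedSpace ℝ X] where
  e : ℕ → X
  coord : ℕ → X →L[ℝ] ℝ
  ortho : ∀ i j, coord i (e j) = if i = j then 1 else 0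
  expansion : ∀ x : X, HasSum (fun i => coord i x • e i) x

section Defs

variable {X : Type*} [NormedAddCommGroup X] [NormedSpace ℝ X]

def SchauderBasis'.IsUnconditionalWith (b : SchauderBasis' X) (C : ℝ) : Prop :=
  ∀ x y : X, (∀ i, |b.coord i y| ≤ |b.coord i x|) → ‖y‖ ≤ C * ‖x‖

def SchauderBasis'.supp (b : SchauderBasis' X) (x : X) : Set ℕ := {i | b.coord i x ≠ 0}

def StrictlySingular {E F : Type*} [NormedAddCommGroup E] [NormedSpace ℝ E]
    [NormedAddCommGroup F] [NormedSpace ℝ F] (T : E →L[ℝ] F) : Prop :=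
  ∀ Y : Submodule ℝ E, ¬ FiniteDimensional ℝ Y →
    ¬ ∃ c : ℝ, 0 < c ∧ ∀ y ∈ Y, c * ‖y‖ ≤ ‖T y‖

def SchauderBasis'.TightBySupport (b : SchauderBasis' X) : Prop :=
  ∀ Y Z : Submodule ℝ X, IsClosed (Y : Set X) → IsClosed (Z : Set X) →
    ¬ FiniteDimensional ℝ Y → ¬ FiniteDimensional ℝ Z →
    (∀ y ∈ Y, ∀ z ∈ Z, ∀ i, b.coord i y ≠ 0 → b.coord i z = 0) →
    IsEmpty (Y ≃L[ℝ] Z)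

def SchauderBasis'.IsBlockSequence (b : SchauderBasis' X) (x : ℕ → X) : Prop :=
  (∀ n, x n ≠ 0) ∧ (∀ n, (b.supp (x n)).Finite) ∧
    ∀ m n i j, m < n → b.coord i (x m) ≠ 0 → b.coord j (x n) ≠ 0 → i < j

def closedSpan (x : ℕ → X) : Submodule ℝ X :=
  (Submodule.span ℝ (Set.range x)).topologicalClosure

def SchauderBasis'.IsDiagonal (b : SchauderBasis' X) (D : X →L[ℝ] X) : Prop :=
  ∀ i, ∃ lam : ℝ, D (b.e i) = lam • b.e i

def IsL1Average (b : SchauderBasis' X) (x : X) (n : ℕ) (c : ℝ) : Prop :=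
  0 < n ∧ 1 ≤ c ∧ ∃ xs : Fin n → X,
    (∀ i, ‖xs i‖ ≤ 1) ∧
    (∀ i j : Fin n, i < j → ∀ p q, b.coord p (xs i) ≠ 0 → b.coord q (xs j) ≠ 0 → p < q) ∧
    x = (n : ℝ)⁻¹ • ∑ i, xs i ∧ 1 / c ≤ ‖x‖

end Defs

section SignLemma

variable {X : Type*} [NormedAddCommGroup X] [NormedSpace ℝ X]

private lemma sign_choice (v : ℕ → X) (s : Finset ℕ) :
    ∀ (w : X) (σ : ℕ → ℝ), (∀ i ∈ s, |σ i| ≤ 1) →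
      ∃ ε : ℕ → ℝ, (∀ i ∈ s, ε i = 1 ∨ ε i = -1) ∧
        ‖w + ∑ i ∈ s, σ i • v i‖ ≤ ‖w + ∑ i ∈ s, ε i • v i‖ := by
  induction s using Finset.induction_on with
  | empty => exact fun w σ _ => ⟨fun _ => 1, by simp, le_rfl⟩
  | @insert a s ha ih =>
    intro w σ hσ
    have haσ : |σ a| ≤ 1 := hσ a (Finset.mem_insert_self a s)
    set Q := ∑ i ∈ s, σ i • v i with hQ
    have key : ‖w + ∑ i ∈ insert a s, σ i • v i‖ ≤
        max ‖(w + (1:ℝ) • v a) + Q‖ ‖(w + (-1 : ℝ) • v a) + Q‖ := by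
      rw [Finset.sum_insert ha]
      set θ := (1 + σ a) / 2 with hθ
      obtain ⟨hl, hr⟩ := abs_le.mp haσ
      have hθ0 : 0 ≤ θ := by rw [hθ]; linarith
      have hθ1 : θ ≤ 1 := by rw [hθ]; linarith
      have hσa : σ a = 2 * θ - 1 := by rw [hθ]; ring
      have hid : w + (σ a • v a + Q) =
          θ • ((w + (1:ℝ) • v a) + Q) + (1 - θ) • ((w + (-1:ℝ) • v a) + Q) := by
        rw [hσa]; module
      rw [← add_assoc, add_assoc w, hid]
      calc ‖θ • ((w + (1:ℝ) • v a) + Q) + (1 - θ) • ((w + (-1:ℝ) • v a) + Q)‖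
          ≤ θ * ‖(w + (1:ℝ) • v a) + Q‖ + (1 - θ) * ‖(w + (-1:ℝ) • v a) + Q‖ := by
            refine (norm_add_le _ _).trans ?_
            rw [norm_smul, norm_smul, Real.norm_of_nonneg hθ0,
              Real.norm_of_nonneg (by linarith)]
        _ ≤ θ * max ‖(w + (1:ℝ) • v a) + Q‖ ‖(w + (-1:ℝ) • v a) + Q‖
            + (1 - θ) * max ‖(w + (1:ℝ) • v a) + Q‖ ‖(w + (-1:ℝ) • v a) + Q‖ :=
            add_le_add (mul_le_mul_of_nonneg_left (le_max_left _ _) hθ0)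
              (mul_le_mul_of_nonneg_left (le_max_right _ _) (by linarith))
        _ = max ‖(w + (1:ℝ) • v a) + Q‖ ‖(w + (-1:ℝ) • v a) + Q‖ := by ring
    have hex : ∃ t : ℝ, (t = 1 ∨ t = -1) ∧
        ‖w + ∑ i ∈ insert a s, σ i • v i‖ ≤ ‖(w + t • v a) + Q‖ := by
      rcases le_total ‖(w + (1:ℝ) • v a) + Q‖ ‖(w + (-1:ℝ) • v a) + Q‖ with hle | hle
      · exact ⟨-1, Or.inr rfl, key.trans (by rw [max_eq_right hle])⟩
      · exact ⟨1, Or.inl rfl, key.trans (by rw [max_eq_left hle])⟩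
    obtain ⟨t, ht, hkey⟩ := hex
    obtain ⟨ε, hε, hbound⟩ := ih (w + t • v a) σ (fun i hi => hσ i (Finset.mem_insert_of_mem hi))
    refine ⟨Function.update ε a t, ?_, ?_⟩
    · intro i hi
      rcases Finset.mem_insert.mp hi with rfl | his
      · simpa using ht
      · rw [Function.update_of_ne (ne_of_mem_of_not_mem his ha)]
        exact hε i his
    · have hsum : ∑ i ∈ insert a s, Function.update ε a t i • v i
          = t • v a + ∑ i ∈ s, ε i • v i := by
        rw [Finset.sum_insert ha, Function.update_self]
        congr 1
        refine Finset.sum_congr rfl fun i hi => ?_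
        rw [Function.update_of_ne (ne_of_mem_of_not_mem hi ha)]
      rw [hsum]
      calc ‖w + ∑ i ∈ insert a s, σ i • v i‖ ≤ ‖(w + t • v a) + Q‖ := hkey
        _ ≤ ‖(w + t • v a) + ∑ i ∈ s, ε i • v i‖ := hbound
        _ = ‖w + (t • v a + ∑ i ∈ s, ε i • v i)‖ := by rw [add_assoc]

private lemma sum_smul_le (v : ℕ → X) (s : Finset ℕ) (R c : ℝ)
    (hR : ∀ t ⊆ s, ‖∑ i ∈ t, v i‖ ≤ R) {σ : ℕ → ℝ} (hσ : ∀ i ∈ s, |σ i| ≤ c) (hc : 0 ≤ c) :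
    ‖∑ i ∈ s, σ i • v i‖ ≤ 3 * (c * R) := by
  have hR0 : 0 ≤ R := by simpa using hR ∅ (Finset.empty_subset s)
  rcases eq_or_lt_of_le hc with h0 | hcpos
  · have hz : ∀ i ∈ s, σ i • v i = 0 := fun i hi => by
      have : σ i = 0 := abs_eq_zero.mp (le_antisymm (h0 ▸ hσ i hi) (abs_nonneg _))
      rw [this, zero_smul]
    rw [Finset.sum_eq_zero hz, norm_zero]
    nlinarith
  · have hsign : ∀ ε : ℕ → ℝ, (∀ i ∈ s, ε i = 1 ∨ ε i = -1) →
        ‖∑ i ∈ s, ε i • v i‖ ≤ 3 * R := by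
      intro ε hε
      set s1 := s.filter (fun i => ε i = 1) with hs1
      have h1 : ∑ i ∈ s1, ε i • v i = ∑ i ∈ s1, v i :=
        Finset.sum_congr rfl fun i hi => by rw [(Finset.mem_filter.mp hi).2, one_smul]
      have h2 : ∑ i ∈ s.filter (fun i => ¬ ε i = 1), ε i • v i
          = - ∑ i ∈ s.filter (fun i => ¬ ε i = 1), v i := by
        rw [← Finset.sum_neg_distrib]
        refine Finset.sum_congr rfl fun i hi => ?_
        obtain ⟨his, hne⟩ := Finset.mem_filter.mp hi
        rcases hε i his with h | h
        · exact absurd h hne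
        · rw [h]; simp
      have hsplit : ∑ i ∈ s, ε i • v i
          = (2 : ℝ) • (∑ i ∈ s1, v i) - ∑ i ∈ s, v i := by
        rw [← Finset.sum_filter_add_sum_filter_not s (fun i => ε i = 1) (fun i => ε i • v i),
          h1, h2, ← Finset.sum_filter_add_sum_filter_not s (fun i => ε i = 1) v, ← hs1]
        rw [two_smul]
        abel
      rw [hsplit]
      have hA : ‖∑ i ∈ s1, v i‖ ≤ R := hR s1 (Finset.filter_subset _ s)
      have hB : ‖∑ i ∈ s, v i‖ ≤ R := hR s (le_refl s)
      calc ‖(2:ℝ) • (∑ i ∈ s1, v i) - ∑ i ∈ s, v i‖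
          ≤ ‖(2:ℝ) • (∑ i ∈ s1, v i)‖ + ‖∑ i ∈ s, v i‖ := norm_sub_le _ _
        _ ≤ 2 * R + R := by
            rw [norm_smul]
            simp only [Real.norm_ofNat]
            gcongr
        _ = 3 * R := by ring
    obtain ⟨ε, hε, hb⟩ := sign_choice v s 0 (fun i => σ i / c)
      (fun i hi => by
        rw [abs_div, abs_of_pos hcpos]
        exact div_le_one_of_le₀ (hσ i hi) hc)
    have hrw : ∑ i ∈ s, σ i • v i = c • ∑ i ∈ s, (σ i / c) • v i := by
      rw [Finset.smul_sum]
      refine Finset.sum_congr rfl fun i hi => ?_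
      rw [smul_smul]
      congr 1
      field_simp
    rw [hrw, norm_smul, Real.norm_of_nonneg hc]
    simp only [zero_add] at hb
    calc c * ‖∑ i ∈ s, (σ i / c) • v i‖ ≤ c * ‖∑ i ∈ s, ε i • v i‖ :=
          mul_le_mul_of_nonneg_left hb hc
      _ ≤ c * (3 * R) := mul_le_mul_of_nonneg_left (hsign ε hε) hc
      _ = 3 * (c * R) := by ring

end SignLemma

section Aux2
variable {X : Type*} [NormedAddCommGroup X] [NormedSpace ℝ X]

lemma SchauderBasis'.eq_zero_of_coords (b : SchauderBasis' X) {w : X}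
    (h : ∀ i, b.coord i w = 0) : w = 0 := by
  have h1 : HasSum (fun i => b.coord i w • b.e i) w := b.expansion w
  have heq : (fun i => b.coord i w • b.e i) = fun _ => (0 : X) := by
    funext i; rw [h i, zero_smul]
  rw [heq] at h1
  exact h1.unique hasSum_zero

lemma SchauderBasis'.eq_of_coords (b : SchauderBasis' X) {w w' : X}
    (h : ∀ i, b.coord i w = b.coord i w') : w = w' := by
  have h2 : ∀ i, b.coord i (w - w') = 0 := fun i => by rw [map_sub, h i, sub_self]
  have := b.eq_zero_of_coords h2
  exact sub_eq_zero.mp this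

lemma SchauderBasis'.partial_sums_bounded (b : SchauderBasis' X) (x : X) :
    ∃ C : ℝ, ∀ s : Finset ℕ, ‖∑ i ∈ s, b.coord i x • b.e i‖ ≤ C := by
  set f : ℕ → X := fun i => b.coord i x • b.e i with hf
  have hsum : HasSum f x := b.expansion x
  have hev : ∀ᶠ s : Finset ℕ in atTop, ‖(∑ i ∈ s, f i) - x‖ < 1 := by
    have := Metric.tendsto_nhds.mp hsum 1 one_pos
    simpa [dist_eq_norm] using this
  obtain ⟨s₀, hs₀⟩ := Filter.eventually_atTop.mp hev
  refine ⟨‖x‖ + 1 + ∑ i ∈ s₀, ‖f i‖, fun s => ?_⟩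
  have hdecomp : ∑ i ∈ s, f i = (∑ i ∈ s ∪ s₀, f i) - ∑ i ∈ s₀ \ s, f i := by
    rw [eq_sub_iff_add_eq, ← Finset.sum_union Finset.sdiff_disjoint.symm,
      Finset.union_sdiff_self_eq_union]
  rw [hdecomp]
  have h1 : ‖∑ i ∈ s ∪ s₀, f i‖ ≤ ‖x‖ + 1 := by
    have := hs₀ (s ∪ s₀) Finset.subset_union_right
    have := norm_sub_norm_le (∑ i ∈ s ∪ s₀, f i) x
    linarith
  have h2 : ‖∑ i ∈ s₀ \ s, f i‖ ≤ ∑ i ∈ s₀, ‖f i‖ :=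
    le_trans (norm_sum_le _ _)
      (Finset.sum_le_sum_of_subset_of_nonneg (Finset.sdiff_subset)
        (fun i _ _ => norm_nonneg _))
  calc ‖(∑ i ∈ s ∪ s₀, f i) - ∑ i ∈ s₀ \ s, f i‖
      ≤ ‖∑ i ∈ s ∪ s₀, f i‖ + ‖∑ i ∈ s₀ \ s, f i‖ := norm_sub_le _ _
    _ ≤ ‖x‖ + 1 + ∑ i ∈ s₀, ‖f i‖ := by linarith

lemma SchauderBasis'.exists_basis_const' [CompleteSpace X] (b : SchauderBasis' X) :
    ∃ K : ℝ, 1 ≤ K ∧ ∀ (s : Finset ℕ) (x : X), ‖∑ i ∈ s, b.coord i x • b.e i‖ ≤ K * ‖x‖ := by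
  set P : Finset ℕ → X →L[ℝ] X := fun s => ∑ i ∈ s, (b.coord i).smulRight (b.e i) with hPdef
  have hP : ∀ (s : Finset ℕ) (x : X), P s x = ∑ i ∈ s, b.coord i x • b.e i := by
    intro s x
    simp [hPdef, ContinuousLinearMap.sum_apply]
  have hpt : ∀ x : X, ∃ C, ∀ s : Finset ℕ, ‖P s x‖ ≤ C := by
    intro x
    obtain ⟨C, hC⟩ := b.partial_sums_bounded x
    exact ⟨C, fun s => by rw [hP]; exact hC s⟩
  obtain ⟨K₀, hK₀⟩ := banach_steinhaus hpt
  refine ⟨max K₀ 1, le_max_right _ _, fun s x => ?_⟩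
  rw [← hP]
  calc ‖P s x‖ ≤ ‖P s‖ * ‖x‖ := (P s).le_opNorm x
    _ ≤ max K₀ 1 * ‖x‖ :=
        mul_le_mul_of_nonneg_right (le_trans (hK₀ s) (le_max_left _ _)) (norm_nonneg x)

end Aux2

section Mult
variable {X : Type*} [NormedAddCommGroup X] [NormedSpace ℝ X]

lemma SchauderBasis'.exists_mult' [CompleteSpace X] (b : SchauderBasis' X)
    {K : ℝ} (hK : ∀ (s : Finset ℕ) (x : X), ‖∑ i ∈ s, b.coord i x • b.e i‖ ≤ K * ‖x‖)
    (σ : ℕ → ℝ) (c : ℝ) (hσ : ∀ i, |σ i| ≤ c) :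
    ∃ M : X →L[ℝ] X, (∀ x j, b.coord j (M x) = σ j * b.coord j x) ∧
      (∀ x, ‖M x‖ ≤ 3 * c * K * ‖x‖) ∧ (∀ i, M (b.e i) = σ i • b.e i) := by
  have hc : 0 ≤ c := le_trans (abs_nonneg _) (hσ 0)
  set v : X → ℕ → X := fun x i => b.coord i x • b.e i with hv
  have hvsum : ∀ x : X, Summable (v x) := fun x => (b.expansion x).summable
  -- summability of multiplied series
  have hsummand : ∀ x : X, Summable (fun i => σ i • v x i) := by
    intro x
    rw [summable_iff_vanishing]
    intro U hU
    obtain ⟨ε, hε, hball⟩ := Metric.mem_nhds_iff.mp hU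
    set ε' : ℝ := ε / (3 * (c + 1)) with hε'
    have hε'pos : 0 < ε' := by positivity
    obtain ⟨s₀, hs₀⟩ := (hvsum x).vanishing (Metric.ball_mem_nhds (0 : X) hε'pos)
    refine ⟨s₀, fun t ht => ?_⟩
    apply hball
    rw [Metric.mem_ball, dist_zero_right]
    have hRt : ∀ t' ⊆ t, ‖∑ i ∈ t', v x i‖ ≤ ε' := by
      intro t' ht'
      have := hs₀ t' (Finset.disjoint_of_subset_left ht' ht)
      rw [Metric.mem_ball, dist_zero_right] at this
      exact le_of_lt this
    have := sum_smul_le (v x) t ε' c hRt (fun i _ => hσ i) hc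
    calc ‖∑ i ∈ t, σ i • v x i‖ ≤ 3 * (c * ε') := this
      _ < ε := by
          rw [hε']
          rw [div_eq_inv_mul]
          have h3c : 3 * (c + 1) > 0 := by positivity
          rw [mul_comm (3 * (c + 1))⁻¹ ε, ← mul_assoc]
          calc 3 * c * (ε * (3 * (c + 1))⁻¹) < 3 * (c + 1) * (ε * (3 * (c + 1))⁻¹) := by
                have : (0:ℝ) < ε * (3 * (c + 1))⁻¹ := by positivity
                nlinarith
            _ = ε := by field_simp
  -- bound on partial sums
  have hKx : ∀ (x : X) (s : Finset ℕ), ‖∑ i ∈ s, σ i • v x i‖ ≤ 3 * (c * (K * ‖x‖)) := by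
    intro x s
    exact sum_smul_le (v x) s (K * ‖x‖) c (fun t _ => hK t x) (fun i _ => hσ i) hc
  -- the linear map
  set M₀ : X →ₗ[ℝ] X :=
    { toFun := fun x => ∑' i, σ i • v x i
      map_add' := by
        intro x y
        show (∑' i, σ i • v (x + y) i) = (∑' i, σ i • v x i) + ∑' i, σ i • v y i
        have h : ∀ i, σ i • v (x + y) i = σ i • v x i + σ i • v y i := by
          intro i
          simp only [hv, map_add, add_smul, smul_add]
        rw [tsum_congr h, Summable.tsum_add (hsummand x) (hsummand y)]
      map_smul' := by
        intro a x
        show (∑' i, σ i • v (a • x) i) = a • ∑' i, σ i • v x i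
        have h : ∀ i, σ i • v (a • x) i = a • (σ i • v x i) := by
          intro i
          simp only [hv, map_smul, smul_smul, smul_eq_mul]
          ring_nf
        rw [tsum_congr h]
        exact ((hsummand x).hasSum.const_smul a).tsum_eq } with hM₀
  have hM₀app : ∀ x, M₀ x = ∑' i, σ i • v x i := fun _ => rfl
  have hnorm : ∀ x, ‖M₀ x‖ ≤ 3 * c * K * ‖x‖ := by
    intro x
    rw [hM₀app]
    have hs := (hsummand x).hasSum
    have htend : Tendsto (fun s : Finset ℕ => ‖∑ i ∈ s, σ i • v x i‖) atTop
        (𝓝 ‖∑' i, σ i • v x i‖) := (continuous_norm.tendsto _).comp hs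
    have := le_of_tendsto htend (Filter.Eventually.of_forall (fun s => hKx x s))
    calc ‖∑' i, σ i • v x i‖ ≤ 3 * (c * (K * ‖x‖)) := this
      _ = 3 * c * K * ‖x‖ := by ring
  set M : X →L[ℝ] X := M₀.mkContinuous (3 * c * K) hnorm with hM
  have hMapp : ∀ x, M x = ∑' i, σ i • v x i := fun _ => rfl
  have hcoord : ∀ x j, b.coord j (M x) = σ j * b.coord j x := by
    intro x j
    rw [hMapp]
    rw [ContinuousLinearMap.map_tsum (b.coord j) (hsummand x)]
    have hterm : ∀ i, b.coord j (σ i • v x i) = if j = i then σ j * b.coord j x else 0 := by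
      intro i
      simp only [hv, map_smul, smul_eq_mul, b.ortho j i]
      by_cases h : j = i
      · subst h; simp
      · simp [h]
    rw [tsum_congr hterm, tsum_eq_single j (fun i hi => by rw [if_neg (Ne.symm hi)])]
    simp
  refine ⟨M, hcoord, fun x => hnorm x, fun i => ?_⟩
  apply b.eq_of_coords
  intro j
  rw [hcoord, map_smul, smul_eq_mul, b.ortho j i]
  by_cases h : j = i
  · subst h; simp
  · simp [h]

end Mult


lemma build_equiv' {E : Type*} [NormedAddCommGroup E] [NormedSpace ℝ E] [CompleteSpace E]
    {F : Type*} [NormedAddCommGroup F] [NormedSpace ℝ F] [CompleteSpace F]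
    (g : E →L[ℝ] F) (c : ℝ) (hc : 0 < c) (hg : ∀ w, c * ‖w‖ ≤ ‖g w‖) :
    IsClosed ((LinearMap.range (g : E →ₗ[ℝ] F) : Submodule ℝ F) : Set F) ∧
      Nonempty (E ≃L[ℝ] ↥(LinearMap.range (g : E →ₗ[ℝ] F))) := by
  have hbound : ∀ w : E, ‖w‖ ≤ (Real.toNNReal c⁻¹ : ℝ) * ‖g w‖ := by
    intro w
    have h2 : ‖w‖ ≤ c⁻¹ * ‖g w‖ := by
      rw [inv_mul_eq_div, le_div_iff₀ hc]
      linarith [hg w]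
    calc ‖w‖ ≤ c⁻¹ * ‖g w‖ := h2
      _ = (Real.toNNReal c⁻¹ : ℝ) * ‖g w‖ := by
          rw [Real.coe_toNNReal _ (le_of_lt (inv_pos.mpr hc))]
  have anti : AntilipschitzWith (Real.toNNReal c⁻¹) g := g.antilipschitz_of_bound hbound
  have hinj : Function.Injective g := anti.injective
  have hclosed : IsClosed (Set.range g) := anti.isClosed_range g.uniformContinuous
  have hrange_eq : ((LinearMap.range (g : E →ₗ[ℝ] F) : Submodule ℝ F) : Set F) = Set.range g := by
    ext z; simp [LinearMap.mem_range]
  have hclosed' : IsClosed ((LinearMap.range (g : E →ₗ[ℝ] F) : Submodule ℝ F) : Set F) := by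
    rw [hrange_eq]; exact hclosed
  refine ⟨hclosed', ?_⟩
  set gc : E →L[ℝ] ↥(LinearMap.range (g : E →ₗ[ℝ] F)) :=
    g.codRestrict (LinearMap.range (g : E →ₗ[ℝ] F)) (fun w => LinearMap.mem_range_self _ w) with hgc
  haveI : CompleteSpace ↥(LinearMap.range (g : E →ₗ[ℝ] F)) := hclosed'.completeSpace_coe
  have hinjc : Function.Injective gc := by
    intro a b hab
    apply hinj
    have := congrArg (Subtype.val) hab
    simpa [hgc] using this
  have hker : LinearMap.ker (gc : E →ₗ[ℝ] ↥(LinearMap.range (g : E →ₗ[ℝ] F))) = ⊥ := LinearMap.ker_eq_bot_of_injective hinjc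
  have hrange : LinearMap.range (gc : E →ₗ[ℝ] ↥(LinearMap.range (g : E →ₗ[ℝ] F))) = ⊤ := by
    rw [LinearMap.range_eq_top]
    rintro ⟨z, hz⟩
    obtain ⟨w, hw⟩ := LinearMap.mem_range.mp hz
    exact ⟨w, Subtype.ext hw⟩
  exact ⟨ContinuousLinearEquiv.ofBijective gc hker hrange⟩


set_option maxHeartbeats 2000000 in
/-- if supp(T xₙ) ∩ supp(x_m) = ∅ for n ≠ m, then T = D|_[xₙ] + S
with D diagonal and S strictly singular. -/
theorem stmt2 {X : Type*} [NormedAddCommGroup X] [NormedSpace ℝ X] [CompleteSpace X]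
    (b : SchauderBasis' X) (hb : b.TightBySupport)
    (x : ℕ → X) (hx : b.IsBlockSequence x)
    (T : ↥(closedSpan x) →L[ℝ] X)
    (hT : ∀ n m, n ≠ m → ∀ u : ↥(closedSpan x), (u : X) = x n →
      ∀ i, b.coord i (T u) ≠ 0 → b.coord i (x m) = 0) :
    ∃ (D : X →L[ℝ] X) (S : ↥(closedSpan x) →L[ℝ] X),
      b.IsDiagonal D ∧ StrictlySingular S ∧
      T = D.comp (closedSpan x).subtypeL + S := by
  classical
  obtain ⟨K, hK1, hK⟩ := b.exists_basis_const'
  have hxmem : ∀ n, x n ∈ closedSpan x := fun n =>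
    Submodule.le_topologicalClosure _ (Submodule.subset_span (Set.mem_range_self n))
  set xh : ℕ → ↥(closedSpan x) := fun n => ⟨x n, hxmem n⟩ with hxh
  have huniq : ∀ i n m, b.coord i (x n) ≠ 0 → b.coord i (x m) ≠ 0 → n = m := by
    intro i n m hn hm
    by_contra hne
    rcases Nat.lt_or_ge n m with h | h
    · exact lt_irrefl i (hx.2.2 n m i i h hn hm)
    · rcases Nat.lt_or_ge m n with h' | h'
      · exact lt_irrefl i (hx.2.2 m n i i h' hm hn)
      · exact hne (le_antisymm (Nat.le_of_lt_succ (Nat.lt_succ_of_le h')) h)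
  -- density principle
  have dens : ∀ (h : ↥(closedSpan x) →L[ℝ] ℝ), (∀ n, h (xh n) = 0) → ∀ u, h u = 0 := by
    intro h h0 u
    have hspan : ∀ w (_ : w ∈ Submodule.span ℝ (Set.range x)) (hw' : w ∈ closedSpan x),
        h ⟨w, hw'⟩ = 0 := by
      intro w hw
      induction hw using Submodule.span_induction with
      | mem w' hw' =>
        obtain ⟨n, rfl⟩ := hw'
        intro hw'
        have he : (⟨x n, hw'⟩ : ↥(closedSpan x)) = xh n := Subtype.ext rfl
        rw [he]
        exact h0 n
      | zero =>
        intro hw'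
        have he : (⟨0, hw'⟩ : ↥(closedSpan x)) = 0 := Subtype.ext rfl
        rw [he, map_zero]
      | add w1 w2 hw1 hw2 ih1 ih2 =>
        intro hw'
        have m1 : w1 ∈ closedSpan x := Submodule.le_topologicalClosure _ hw1
        have m2 : w2 ∈ closedSpan x := Submodule.le_topologicalClosure _ hw2
        have he : (⟨w1 + w2, hw'⟩ : ↥(closedSpan x)) = ⟨w1, m1⟩ + ⟨w2, m2⟩ := Subtype.ext rfl
        rw [he, map_add, ih1 m1, ih2 m2, add_zero]
      | smul a w1 hw1 ih1 =>
        intro hw'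
        have m1 : w1 ∈ closedSpan x := Submodule.le_topologicalClosure _ hw1
        have he : (⟨a • w1, hw'⟩ : ↥(closedSpan x)) = a • (⟨w1, m1⟩ : ↥(closedSpan x)) :=
          Subtype.ext rfl
        rw [he, map_smul, ih1 m1, smul_zero]
    have hcl : IsClosed {u : ↥(closedSpan x) | h u = 0} :=
      isClosed_eq h.continuous continuous_const
    have hmem : (u : X) ∈ closure ((Submodule.span ℝ (Set.range x) : Submodule ℝ X) : Set X) := by
      rw [← Submodule.topologicalClosure_coe]
      exact u.2
    have hucl : u ∈ closure {u : ↥(closedSpan x) | (u : X) ∈ Submodule.span ℝ (Set.range x)} := by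
      rw [Metric.mem_closure_iff]
      intro ε hε
      rw [Metric.mem_closure_iff] at hmem
      obtain ⟨w, hw, hdist⟩ := hmem ε hε
      exact ⟨⟨w, Submodule.le_topologicalClosure _ hw⟩, hw, by rwa [Subtype.dist_eq]⟩
    have hsub : closure {u : ↥(closedSpan x) | (u : X) ∈ Submodule.span ℝ (Set.range x)} ⊆
        {u : ↥(closedSpan x) | h u = 0} := by
      refine closure_minimal ?_ hcl
      intro u' hu'
      have := hspan ↑u' hu' u'.2
      simpa using this
    exact hsub hucl
  -- the multiplier symbol
  set μ : ℕ → ℝ := fun i =>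
    if hi : ∃ n, b.coord i (x n) ≠ 0 then
      b.coord i (T (xh hi.choose)) / b.coord i (x hi.choose) else 0 with hμ
  have hμ0 : ∀ i, (¬ ∃ n, b.coord i (x n) ≠ 0) → μ i = 0 := by
    intro i hi
    simp only [hμ]
    rw [dif_neg hi]
  have lemA : ∀ i (hi : ∃ n, b.coord i (x n) ≠ 0) (u : ↥(closedSpan x)),
      b.coord i (T u) = μ i * b.coord i (u : X) := by
    intro i hi u
    set h : ↥(closedSpan x) →L[ℝ] ℝ :=
      (b.coord i).comp T - μ i • ((b.coord i).comp (closedSpan x).subtypeL) with hh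
    have h0 : ∀ n, h (xh n) = 0 := by
      intro n
      have happ : h (xh n) = b.coord i (T (xh n)) - μ i * b.coord i (x n) := by
        simp [hh, ContinuousLinearMap.sub_apply, ContinuousLinearMap.smul_apply,
          ContinuousLinearMap.comp_apply, smul_eq_mul]
        exact Or.inl rfl
      rw [happ]
      by_cases hn : b.coord i (x n) ≠ 0
      · have hch := hi.choose_spec
        have hcn : hi.choose = n := huniq i _ n hch hn
        have hμi : μ i = b.coord i (T (xh n)) / b.coord i (x n) := by
          simp only [hμ]
          rw [dif_pos hi, hcn]
        rw [hμi]
        field_simp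
        ring
      · push_neg at hn
        obtain ⟨m, hm⟩ := hi
        have hmn : n ≠ m := fun e => hm (e ▸ hn)
        have hTz : b.coord i (T (xh n)) = 0 := by
          by_contra hne
          exact hm (hT n m hmn (xh n) rfl i hne)
        rw [hTz, hn, mul_zero, sub_zero]
    have hu := dens h h0 u
    have happ : h u = b.coord i (T u) - μ i * b.coord i (u : X) := by
      simp [hh, ContinuousLinearMap.sub_apply, ContinuousLinearMap.smul_apply,
        ContinuousLinearMap.comp_apply, smul_eq_mul]
    rw [happ] at hu
    linarith
  have lemB : ∀ i, (¬ ∃ n, b.coord i (x n) ≠ 0) → ∀ u : ↥(closedSpan x),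
      b.coord i (u : X) = 0 := by
    intro i hi u
    push_neg at hi
    have := dens ((b.coord i).comp (closedSpan x).subtypeL) (fun n => by
      simpa using hi n) u
    simpa using this
  -- cut level
  set C : ℝ := 6 * K * ‖T‖ + 1 with hC
  have hK0 : (0:ℝ) < K := lt_of_lt_of_le one_pos hK1
  have hC0 : (0:ℝ) < C := by
    have : (0:ℝ) ≤ 6 * K * ‖T‖ := by positivity
    rw [hC]; linarith
  -- the diagonal operator
  set ν : ℕ → ℝ := fun i => if |μ i| ≤ C then μ i else 0 with hν
  have hνb : ∀ i, |ν i| ≤ C := by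
    intro i
    simp only [hν]
    by_cases h : |μ i| ≤ C
    · rwa [if_pos h]
    · rw [if_neg h]; simpa using le_of_lt hC0
  obtain ⟨D, hDcoord, _, hDdiag⟩ := b.exists_mult' hK ν C hνb
  -- the indicator of the big-symbol set
  set χ : ℕ → ℝ := fun i => if C < |μ i| then (1:ℝ) else 0 with hχ
  have hχb : ∀ i, |χ i| ≤ 1 := by
    intro i
    simp only [hχ]
    by_cases h : C < |μ i|
    · rw [if_pos h]; simp
    · rw [if_neg h]; simp
  obtain ⟨MB, hMBcoord, _, _⟩ := b.exists_mult' hK χ 1 hχb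
  -- the inverse multiplier on the big-symbol set
  set τ : ℕ → ℝ := fun i => if C < |μ i| then (μ i)⁻¹ else 0 with hτ
  have hτb : ∀ i, |τ i| ≤ C⁻¹ := by
    intro i
    simp only [hτ]
    by_cases h : C < |μ i|
    · rw [if_pos h, abs_inv]
      exact inv_anti₀ hC0 (le_of_lt h)
    · rw [if_neg h]
      simpa using le_of_lt (inv_pos.mpr hC0)
  obtain ⟨Mτ, hMτcoord, hMτnorm, _⟩ := b.exists_mult' hK τ C⁻¹ hτb
  -- key identity : MB ∘ ι = Mτ ∘ T on the block subspace
  have hPB : ∀ u : ↥(closedSpan x), MB (u : X) = Mτ (T u) := by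
    intro u
    apply b.eq_of_coords
    intro j
    rw [hMBcoord, hMτcoord]
    by_cases hj : C < |μ j|
    · have hμj : μ j ≠ 0 := by
        intro h0
        rw [h0, abs_zero] at hj
        exact absurd hj (not_lt.mpr (le_of_lt hC0))
      have hUj : ∃ n, b.coord j (x n) ≠ 0 := by
        by_contra hU
        exact hμj (hμ0 j hU)
      rw [lemA j hUj u]
      simp only [hχ, hτ, if_pos hj]
      rw [one_mul, ← mul_assoc, inv_mul_cancel₀ hμj, one_mul]
    · simp only [hχ, hτ, if_neg hj, zero_mul]
  -- smallness of the big-symbol projection on the block subspace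
  have hsmall : ∀ u : ↥(closedSpan x), ‖MB (u : X)‖ ≤ (1/2) * ‖u‖ := by
    intro u
    rw [hPB u]
    calc ‖Mτ (T u)‖ ≤ 3 * C⁻¹ * K * ‖T u‖ := hMτnorm _
      _ ≤ 3 * C⁻¹ * K * (‖T‖ * ‖u‖) := by
          have h1 : (0:ℝ) ≤ 3 * C⁻¹ * K := by positivity
          exact mul_le_mul_of_nonneg_left (T.le_opNorm u) h1
      _ ≤ (1/2) * ‖u‖ := by
          have hrw : 3 * C⁻¹ * K * (‖T‖ * ‖u‖) = (3 * K * ‖T‖ / C) * ‖u‖ := by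
            field_simp
          rw [hrw]
          have hle : 3 * K * ‖T‖ / C ≤ 1/2 := by
            rw [div_le_iff₀ hC0, hC]
            nlinarith [norm_nonneg T, hK0]
          exact mul_le_mul_of_nonneg_right hle (norm_nonneg u)
  -- the strictly singular part
  set S : ↥(closedSpan x) →L[ℝ] X := T - D.comp (closedSpan x).subtypeL with hS
  have hScoord : ∀ (u : ↥(closedSpan x)) j,
      b.coord j (S u) = b.coord j (T u) - ν j * b.coord j (u : X) := by
    intro u j
    rw [hS]
    simp only [ContinuousLinearMap.sub_apply, ContinuousLinearMap.comp_apply, map_sub]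
    rw [hDcoord]
    rfl
  refine ⟨D, S, fun i => ⟨ν i, hDdiag i⟩, ?_, by rw [hS]; abel⟩
  -- strict singularity
  intro Y hY
  rintro ⟨c, hc, hcY⟩
  haveI hcompl : CompleteSpace ↥(closedSpan x) :=
    (Submodule.isClosed_topologicalClosure _).completeSpace_coe
  set Yb : Submodule ℝ ↥(closedSpan x) := Y.topologicalClosure with hYb
  haveI : CompleteSpace ↥Yb := (Submodule.isClosed_topologicalClosure _).completeSpace_coe
  have hYbS : ∀ u : ↥(closedSpan x), u ∈ Yb → c * ‖u‖ ≤ ‖S u‖ := by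
    intro u hu
    have hsub : (Yb : Set ↥(closedSpan x)) ⊆ {u : ↥(closedSpan x) | c * ‖u‖ ≤ ‖S u‖} := by
      rw [hYb, Submodule.topologicalClosure_coe]
      refine closure_minimal (fun u' hu' => hcY u' hu') ?_
      exact isClosed_le (continuous_const.mul continuous_norm) S.continuous.norm
    exact hsub hu
  -- the two disjointly supported isomorphic copies
  set g1 : ↥Yb →L[ℝ] X :=
    ((ContinuousLinearMap.id ℝ X) - MB).comp
      ((closedSpan x).subtypeL.comp Yb.subtypeL) with hg1def
  set g2 : ↥Yb →L[ℝ] X := S.comp Yb.subtypeL with hg2def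
  have hg1app : ∀ w : ↥Yb, g1 w = ((w : ↥(closedSpan x)) : X) - MB ((w : ↥(closedSpan x)) : X) := by
    intro w
    simp [hg1def, ContinuousLinearMap.sub_apply]
  have hg2app : ∀ w : ↥Yb, g2 w = S (w : ↥(closedSpan x)) := fun w => rfl
  have hg1low : ∀ w : ↥Yb, (1/2) * ‖w‖ ≤ ‖g1 w‖ := by
    intro w
    rw [hg1app]
    have h1 : ‖((w : ↥(closedSpan x)) : X)‖ = ‖w‖ := rfl
    have h2 := hsmall (w : ↥(closedSpan x))
    have h3 : ‖(w : ↥(closedSpan x))‖ = ‖w‖ := rfl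
    calc (1/2) * ‖w‖ = ‖w‖ - (1/2) * ‖w‖ := by ring
      _ ≤ ‖((w : ↥(closedSpan x)) : X)‖ - ‖MB ((w : ↥(closedSpan x)) : X)‖ := by
          rw [h1]
          have h4 := h2
          rw [h3] at h4
          linarith
      _ ≤ ‖((w : ↥(closedSpan x)) : X) - MB ((w : ↥(closedSpan x)) : X)‖ :=
          norm_sub_norm_le _ _
  have hg2low : ∀ w : ↥Yb, c * ‖w‖ ≤ ‖g2 w‖ := by
    intro w
    rw [hg2app]
    have h3 : ‖(w : ↥(closedSpan x))‖ = ‖w‖ := rfl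
    rw [← h3]
    exact hYbS _ w.2
  obtain ⟨hcl1, ⟨e1⟩⟩ := build_equiv' g1 (1/2) (by norm_num) hg1low
  obtain ⟨hcl2, ⟨e2⟩⟩ := build_equiv' g2 c hc hg2low
  set Z1 : Submodule ℝ X := LinearMap.range (g1 : ↥Yb →ₗ[ℝ] X) with hZ1
  set Z2 : Submodule ℝ X := LinearMap.range (g2 : ↥Yb →ₗ[ℝ] X) with hZ2
  have hFDYb : ¬ FiniteDimensional ℝ ↥Yb := by
    intro hfd
    exact hY (Submodule.finiteDimensional_of_le Y.le_topologicalClosure)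
  have hFD1 : ¬ FiniteDimensional ℝ ↥Z1 := by
    intro hfd
    exact hFDYb (Module.Finite.equiv e1.symm.toLinearEquiv)
  have hFD2 : ¬ FiniteDimensional ℝ ↥Z2 := by
    intro hfd
    exact hFDYb (Module.Finite.equiv e2.symm.toLinearEquiv)
  have hdisj : ∀ y ∈ Z1, ∀ z ∈ Z2, ∀ i, b.coord i y ≠ 0 → b.coord i z = 0 := by
    rintro y hy z hz i hyne
    obtain ⟨w, rfl⟩ := LinearMap.mem_range.mp hy
    obtain ⟨w', rfl⟩ := LinearMap.mem_range.mp hz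
    change b.coord i (g1 w) ≠ 0 at hyne
    change b.coord i (g2 w') = 0
    have hyc : b.coord i (g1 w) =
        (1 - χ i) * b.coord i (((w : ↥(closedSpan x)) : X)) := by
      rw [hg1app, map_sub, hMBcoord]
      ring
    rw [hyc] at hyne
    have hiU : ∃ n, b.coord i (x n) ≠ 0 := by
      by_contra hU
      rw [lemB i hU] at hyne
      simp at hyne
    have hile : ¬ C < |μ i| := by
      intro hlt
      simp only [hχ, if_pos hlt] at hyne
      simp at hyne
    rw [hg2app, hScoord, lemA i hiU]
    have hνμ : ν i = μ i := by
      simp only [hν]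
      rw [if_pos (not_lt.mp hile)]
    rw [hνμ]
    ring
  exact (hb Z1 Z2 hcl1 hcl2 hFD1 hFD2 hdisj).false (e1.symm.trans e2)
end

section
/- Let X be a Banach space with an unconditional basis (e_i), and let Y = [y_n], Z = [z_n] be block subspaces satisfying: (D1) min(supp y_{n+1} ∪ supp z_{n+1}) ≥ max(supp y_n ∪ supp z_n) for all n, and (D2) inf{‖y − z‖ : y ∈ Y, z ∈ Z, ‖y‖ = ‖z‖ = 1} > 0. Let P_Y: Y + Z → Y be the bounded projection y + z ↦ y. Then P_Y = D|_{Y+Z} + S with D: X → X a bounded diagonal operator and S strictly singular if and only if there exists a partition ℕ = F ∪ G such that the coordinate projections P_G|_Y and P_F|_Z are strictly singular. Moreover, in that case D may be chosen to be the coordinate projection P_F. -/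
open scoped BigOperators Classical
open Filter Topology

section Aux
variable {E F : Type*} [NormedAddCommGroup E] [NormedSpace ℝ E]
  [NormedAddCommGroup F] [NormedSpace ℝ F]

lemma aux_findim_of_ker (N : Submodule ℝ E) (f : E →L[ℝ] ℝ)
    (h : FiniteDimensional ℝ ↥(N ⊓ LinearMap.ker (f : E →ₗ[ℝ] ℝ))) :
    FiniteDimensional ℝ ↥N := by
  set g : ↥N →ₗ[ℝ] ℝ := (f : E →ₗ[ℝ] ℝ).domRestrict N
  have hker : LinearMap.ker g = Submodule.comap N.subtype (N ⊓ LinearMap.ker (f : E →ₗ[ℝ] ℝ)) := by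
    ext x
    simp [g, LinearMap.mem_ker, x.2]
  have e1 : ↥(LinearMap.ker g) ≃ₗ[ℝ] ↥(N ⊓ LinearMap.ker (f : E →ₗ[ℝ] ℝ)) := by
    rw [hker]
    exact Submodule.comapSubtypeEquivOfLe inf_le_left
  have hkfd : FiniteDimensional ℝ ↥(LinearMap.ker g) := e1.symm.finiteDimensional
  haveI hrfd : FiniteDimensional ℝ ↥(LinearMap.range g) :=
    FiniteDimensional.finiteDimensional_submodule _
  have hr := LinearMap.lift_rank_range_add_rank_ker g
  have : Cardinal.lift.{0} (Module.rank ℝ ↥N) < Cardinal.aleph0 := by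
    rw [← hr]
    exact Cardinal.add_lt_aleph0 ((Cardinal.lift_lt_aleph0).2 (Module.rank_lt_aleph0 ℝ _))
      ((Cardinal.lift_lt_aleph0).2 (Module.rank_lt_aleph0 ℝ _))
  exact IsNoetherian.iff_fg.1 (IsNoetherian.iff_rank_lt_aleph0.2 (Cardinal.lift_lt_aleph0.1 this))

lemma exists_unit_small (T : E →L[ℝ] F) (hT : StrictlySingular T)
    (N : Submodule ℝ E) (hN : ¬ FiniteDimensional ℝ N) {δ : ℝ} (hδ : 0 < δ) :
    ∃ p : E × (E →L[ℝ] ℝ), p.1 ∈ N ∧ ‖p.1‖ = 1 ∧ ‖T p.1‖ ≤ δ ∧ ‖p.2‖ = 1 ∧ p.2 p.1 = 1 := by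
  have h := hT N hN
  push_neg at h
  obtain ⟨x, hxN, hx⟩ := h δ hδ
  have hx0 : x ≠ 0 := by
    rintro rfl
    simp at hx
  set u : E := ‖x‖⁻¹ • x with hu
  have hnx : (0:ℝ) < ‖x‖ := norm_pos_iff.2 hx0
  have huN : u ∈ N := N.smul_mem _ hxN
  have hun : ‖u‖ = 1 := by
    rw [hu, norm_smul, norm_inv, norm_norm, inv_mul_cancel₀ hnx.ne']
  have hTu : ‖T u‖ ≤ δ := by
    rw [hu, map_smul, norm_smul, norm_inv, norm_norm]
    have h2 : ‖x‖⁻¹ * ‖T x‖ ≤ ‖x‖⁻¹ * (δ * ‖x‖) :=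
      mul_le_mul_of_nonneg_left hx.le (inv_nonneg.2 hnx.le)
    calc ‖x‖⁻¹ * ‖T x‖ ≤ ‖x‖⁻¹ * (δ * ‖x‖) := h2
      _ = δ := by field_simp
  obtain ⟨g, hg1, hg2⟩ := exists_dual_vector ℝ u (by rw [← norm_pos_iff, hun]; norm_num)
  refine ⟨(u, g), huN, hun, hTu, hg1, ?_⟩
  rw [hg2, hun]
  norm_num

end Aux

section Chain
variable {E F : Type*} [NormedAddCommGroup E] [NormedSpace ℝ E]
  [NormedAddCommGroup F] [NormedSpace ℝ F]

noncomputable def pickPair (T : E →L[ℝ] F) (δ : ℝ) (N : Submodule ℝ E) : E × (E →L[ℝ] ℝ) :=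
  if h : ∃ p : E × (E →L[ℝ] ℝ), p.1 ∈ N ∧ ‖p.1‖ = 1 ∧ ‖T p.1‖ ≤ δ ∧ ‖p.2‖ = 1 ∧ p.2 p.1 = 1
  then h.choose else (0, 0)

noncomputable def chainSub (T : E →L[ℝ] F) (ε : ℝ) (M : Submodule ℝ E) : ℕ → Submodule ℝ E
  | 0 => M
  | n+1 => chainSub T ε M n ⊓
      LinearMap.ker (((pickPair T (ε * ((4:ℝ)^(n+1))⁻¹) (chainSub T ε M n)).2 : E →L[ℝ] ℝ) : E →ₗ[ℝ] ℝ)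

lemma chain_infdim (T : E →L[ℝ] F) (ε : ℝ) (M : Submodule ℝ E)
    (hM : ¬ FiniteDimensional ℝ M) : ∀ n, ¬ FiniteDimensional ℝ (chainSub T ε M n)
  | 0 => hM
  | (n+1) => fun h => chain_infdim T ε M hM n (aux_findim_of_ker _ _ h)

lemma chain_antitone (T : E →L[ℝ] F) (ε : ℝ) (M : Submodule ℝ E) :
    ∀ {m n : ℕ}, m ≤ n → chainSub T ε M n ≤ chainSub T ε M m := by
  intro m n h
  induction n with
  | zero => simp_all
  | succ n ih =>
    rcases Nat.lt_or_ge m (n+1) with h' | h'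
    · exact le_trans (inf_le_left) (ih (Nat.lt_succ_iff.1 h'))
    · have : m = n + 1 := le_antisymm h h'
      subst this
      exact le_rfl

noncomputable def xv (T : E →L[ℝ] F) (ε : ℝ) (M : Submodule ℝ E) (n : ℕ) : E :=
  (pickPair T (ε * ((4:ℝ)^(n+1))⁻¹) (chainSub T ε M n)).1

noncomputable def fv (T : E →L[ℝ] F) (ε : ℝ) (M : Submodule ℝ E) (n : ℕ) : E →L[ℝ] ℝ :=
  (pickPair T (ε * ((4:ℝ)^(n+1))⁻¹) (chainSub T ε M n)).2

lemma xv_spec (T : E →L[ℝ] F) (hT : StrictlySingular T) {ε : ℝ} (hε : 0 < ε)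
    (M : Submodule ℝ E) (hM : ¬ FiniteDimensional ℝ M) (n : ℕ) :
    xv T ε M n ∈ chainSub T ε M n ∧ ‖xv T ε M n‖ = 1 ∧
      ‖T (xv T ε M n)‖ ≤ ε * ((4:ℝ)^(n+1))⁻¹ ∧ ‖fv T ε M n‖ = 1 ∧
      fv T ε M n (xv T ε M n) = 1 := by
  have hδ : (0:ℝ) < ε * ((4:ℝ)^(n+1))⁻¹ := by positivity
  have h := exists_unit_small T hT (chainSub T ε M n) (chain_infdim T ε M hM n) hδ
  rw [xv, fv, pickPair, dif_pos h]
  exact h.choose_spec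

lemma tri_spec (T : E →L[ℝ] F) (hT : StrictlySingular T) {ε : ℝ} (hε : 0 < ε)
    (M : Submodule ℝ E) (hM : ¬ FiniteDimensional ℝ M) {m n : ℕ} (h : m < n) :
    fv T ε M m (xv T ε M n) = 0 := by
  have hx := (xv_spec T hT hε M hM n).1
  have h2 : chainSub T ε M n ≤ chainSub T ε M (m+1) := chain_antitone T ε M h
  have := h2 hx
  rw [chainSub] at this
  exact this.2

end Chain

section Small
variable {E F : Type*} [NormedAddCommGroup E] [NormedSpace ℝ E]
  [NormedAddCommGroup F] [NormedSpace ℝ F]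

lemma coeff_bound (xs : ℕ → E) (f : ℕ → E →L[ℝ] ℝ)
    (hxs : ∀ n, ‖xs n‖ = 1) (hf : ∀ n, ‖f n‖ = 1) (hdiag : ∀ n, f n (xs n) = 1)
    (htri : ∀ m n, m < n → f m (xs n) = 0)
    (s : Finset ℕ) (a : ℕ → ℝ) :
    ∀ n ∈ s, |a n| ≤ 2^n * ‖∑ i ∈ s, a i • xs i‖ := by
  set x := ∑ i ∈ s, a i • xs i with hx
  intro n
  induction n using Nat.strong_induction_on with
  | _ n ih =>
    intro hns
    have hfmx : f n x = ∑ i ∈ s, a i * f n (xs i) := by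
      rw [hx, map_sum]
      simp [smul_eq_mul]
    have hsplit : ∑ i ∈ s, a i * f n (xs i)
        = a n + ∑ i ∈ (s.erase n).filter (· < n), a i * f n (xs i) := by
      rw [← Finset.add_sum_erase _ _ hns, hdiag n, mul_one]
      congr 1
      refine (Finset.sum_subset (Finset.filter_subset _ _) ?_).symm
      intro i hi hni
      have h1 : i ≠ n := Finset.ne_of_mem_erase hi
      have h2 : ¬ i < n := by
        simp only [Finset.mem_filter] at hni
        exact fun h => hni ⟨hi, h⟩
      have : n < i := lt_of_le_of_ne (not_lt.1 h2) (Ne.symm h1)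
      rw [htri n i this, mul_zero]
    have han : a n = f n x - ∑ i ∈ (s.erase n).filter (· < n), a i * f n (xs i) := by
      rw [hfmx, hsplit]; ring
    have hb1 : |f n x| ≤ ‖x‖ := by
      have := (f n).le_opNorm x
      rwa [hf n, one_mul] at this
    have hb2 : |∑ i ∈ (s.erase n).filter (· < n), a i * f n (xs i)|
        ≤ ∑ i ∈ (s.erase n).filter (· < n), 2^i * ‖x‖ := by
      refine (Finset.abs_sum_le_sum_abs _ _).trans (Finset.sum_le_sum ?_)
      intro i hi
      simp only [Finset.mem_filter] at hi
      have hai : |a i| ≤ 2^i * ‖x‖ := ih i hi.2 (Finset.mem_of_mem_erase hi.1)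
      have hfi : |f n (xs i)| ≤ 1 := by
        have := (f n).le_opNorm (xs i)
        rwa [hf n, one_mul, hxs i] at this
      calc |a i * f n (xs i)| = |a i| * |f n (xs i)| := abs_mul _ _
        _ ≤ (2^i * ‖x‖) * 1 := by
            refine mul_le_mul hai hfi (abs_nonneg _) (by positivity)
        _ = 2^i * ‖x‖ := by ring
    have hb3 : ∑ i ∈ (s.erase n).filter (· < n), 2^i * ‖x‖ ≤ (2^n - 1) * ‖x‖ := by
      have hsub : (s.erase n).filter (· < n) ⊆ Finset.range n := by
        intro i hi
        simp only [Finset.mem_filter] at hi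
        exact Finset.mem_range.2 hi.2
      calc ∑ i ∈ (s.erase n).filter (· < n), (2:ℝ)^i * ‖x‖
          ≤ ∑ i ∈ Finset.range n, (2:ℝ)^i * ‖x‖ := by
            refine Finset.sum_le_sum_of_subset_of_nonneg hsub ?_
            intro i _ _; positivity
        _ = (∑ i ∈ Finset.range n, (2:ℝ)^i) * ‖x‖ := by rw [Finset.sum_mul]
        _ = (2^n - 1) * ‖x‖ := by
            rw [geom_sum_eq (by norm_num : (2:ℝ) ≠ 1)]
            norm_num
    calc |a n| ≤ |f n x| + |∑ i ∈ (s.erase n).filter (· < n), a i * f n (xs i)| := by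
          rw [han]; exact abs_sub _ _
      _ ≤ ‖x‖ + (2^n - 1) * ‖x‖ := add_le_add hb1 (hb2.trans hb3)
      _ = 2^n * ‖x‖ := by ring

end Small

section Main
variable {E F G : Type*} [NormedAddCommGroup E] [NormedSpace ℝ E]
  [NormedAddCommGroup F] [NormedSpace ℝ F]
  [NormedAddCommGroup G] [NormedSpace ℝ G]

lemma small_subspace (T : E →L[ℝ] F) (hT : StrictlySingular T)
    (M : Submodule ℝ E) (hM : ¬ FiniteDimensional ℝ M) {ε : ℝ} (hε : 0 < ε) :
    ∃ N : Submodule ℝ E, N ≤ M ∧ ¬ FiniteDimensional ℝ N ∧ ∀ x ∈ N, ‖T x‖ ≤ ε * ‖x‖ := by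
  set xs := xv T ε M with hxsdef
  set f := fv T ε M with hfdef
  have spec := fun n => xv_spec T hT hε M hM n
  have hmem : ∀ n, xs n ∈ chainSub T ε M n := fun n => (spec n).1
  have hxs : ∀ n, ‖xs n‖ = 1 := fun n => (spec n).2.1
  have hTxs : ∀ n, ‖T (xs n)‖ ≤ ε * ((4:ℝ)^(n+1))⁻¹ := fun n => (spec n).2.2.1
  have hf : ∀ n, ‖f n‖ = 1 := fun n => (spec n).2.2.2.1
  have hdiag : ∀ n, f n (xs n) = 1 := fun n => (spec n).2.2.2.2
  have htri : ∀ m n, m < n → f m (xs n) = 0 := fun m n h => tri_spec T hT hε M hM h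
  have hcoeff := coeff_bound xs f hxs hf hdiag htri
  refine ⟨Submodule.span ℝ (Set.range xs), ?_, ?_, ?_⟩
  · rw [Submodule.span_le]
    rintro _ ⟨n, rfl⟩
    exact chain_antitone T ε M (Nat.zero_le n) (hmem n)
  · intro hfd
    have hli : LinearIndependent ℝ xs := by
      rw [linearIndependent_iff']
      intro s g hsum n hns
      have := hcoeff s g n hns
      rw [hsum] at this
      simpa using (abs_nonpos_iff.1 (by simpa using this))
    set xs' : ℕ → ↥(Submodule.span ℝ (Set.range xs)) :=
      fun n => ⟨xs n, Submodule.subset_span (Set.mem_range_self n)⟩ with hxs'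
    have hli' : LinearIndependent ℝ xs' := by
      refine LinearIndependent.of_comp (Submodule.span ℝ (Set.range xs)).subtype ?_
      convert hli
      rfl
    exact Module.Finite.not_linearIndependent_of_infinite xs' hli'
  · intro x hxmem
    obtain ⟨c, hc⟩ := Finsupp.mem_span_range_iff_exists_finsupp.1 hxmem
    have hxrepr : x = ∑ i ∈ c.support, c i • xs i := by
      rw [← hc]; rfl
    have hb : ∀ i ∈ c.support, |c i| ≤ 2^i * ‖x‖ := by
      intro i hi
      have := hcoeff c.support c i hi
      rwa [← hxrepr] at this
    have hTx : ‖T x‖ ≤ ∑ i ∈ c.support, |c i| * ‖T (xs i)‖ := by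
      rw [hxrepr, map_sum]
      refine (norm_sum_le _ _).trans (Finset.sum_le_sum ?_)
      intro i _
      rw [map_smul, norm_smul, Real.norm_eq_abs]
    have hsum2 : ∑ i ∈ c.support, |c i| * ‖T (xs i)‖
        ≤ ∑ i ∈ c.support, (ε * ‖x‖ / 4) * (1/2)^i := by
      refine Finset.sum_le_sum ?_
      intro i hi
      calc |c i| * ‖T (xs i)‖ ≤ (2^i * ‖x‖) * (ε * ((4:ℝ)^(i+1))⁻¹) := by
            refine mul_le_mul (hb i hi) (hTxs i) (norm_nonneg _) (by positivity)
        _ = (ε * ‖x‖ / 4) * (1/2)^i := by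
            have h2 : (4:ℝ)^(i+1) = 4 * (2^i * 2^i) := by
              rw [pow_succ, show (4:ℝ) = 2*2 by norm_num, mul_pow]; ring
            rw [h2, div_pow, one_pow]
            have h3 : (2:ℝ)^i ≠ 0 := by positivity
            field_simp
    have hgeo : ∑ i ∈ c.support, ((1:ℝ)/2)^i ≤ 2 := by
      have hsub : c.support ⊆ Finset.range (c.support.sup id + 1) := by
        intro i hi
        exact Finset.mem_range.2 (Nat.lt_succ_of_le (Finset.le_sup (f := id) hi))
      calc ∑ i ∈ c.support, ((1:ℝ)/2)^i
          ≤ ∑ i ∈ Finset.range (c.support.sup id + 1), ((1:ℝ)/2)^i := by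
            refine Finset.sum_le_sum_of_subset_of_nonneg hsub ?_
            intro i _ _; positivity
        _ ≤ 2 := sum_geometric_two_le _
    calc ‖T x‖ ≤ ∑ i ∈ c.support, (ε * ‖x‖ / 4) * (1/2)^i := hTx.trans hsum2
      _ = (ε * ‖x‖ / 4) * ∑ i ∈ c.support, ((1:ℝ)/2)^i := by rw [Finset.mul_sum]
      _ ≤ (ε * ‖x‖ / 4) * 2 := by
          refine mul_le_mul_of_nonneg_left hgeo (by positivity)
      _ ≤ ε * ‖x‖ := by nlinarith [norm_nonneg x, hε.le, mul_nonneg hε.le (norm_nonneg x)]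

lemma ss_sub (A B : E →L[ℝ] F) (hA : StrictlySingular A) (hB : StrictlySingular B) :
    StrictlySingular (A - B) := by
  intro W hW
  rintro ⟨c, hc, hlow⟩
  obtain ⟨N1, hN1W, hN1, hN1small⟩ := small_subspace A hA W hW (by positivity : (0:ℝ) < c/4)
  obtain ⟨N2, hN2N1, hN2, hN2small⟩ := small_subspace B hB N1 hN1 (by positivity : (0:ℝ) < c/4)
  have : ∃ x : E, x ∈ N2 ∧ x ≠ 0 := by
    by_contra h
    push_neg at h
    have : N2 = ⊥ := (Submodule.eq_bot_iff _).2 h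
    exact hN2 (this ▸ inferInstance)
  obtain ⟨x, hxN2, hx0⟩ := this
  have h1 := hlow x (hN1W (hN2N1 hxN2))
  have h2 : ‖(A - B) x‖ ≤ c/2 * ‖x‖ := by
    calc ‖(A - B) x‖ = ‖A x - B x‖ := by rw [ContinuousLinearMap.sub_apply]
      _ ≤ ‖A x‖ + ‖B x‖ := norm_sub_le _ _
      _ ≤ c/4 * ‖x‖ + c/4 * ‖x‖ := add_le_add (hN1small x (hN2N1 hxN2)) (hN2small x hxN2)
      _ = c/2 * ‖x‖ := by ring
  have hxn : (0:ℝ) < ‖x‖ := norm_pos_iff.2 hx0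
  nlinarith

lemma ss_comp (T : F →L[ℝ] G) (R : E →L[ℝ] F) (hT : StrictlySingular T) :
    StrictlySingular (T.comp R) := by
  intro W hW
  rintro ⟨c, hc, hlow⟩
  set W2 := W.map (R : E →ₗ[ℝ] F) with hW2
  have hRinj : ∀ x ∈ W, R x = 0 → x = 0 := by
    intro x hx hRx
    have h1 := hlow x hx
    rw [ContinuousLinearMap.comp_apply, hRx, map_zero, norm_zero] at h1
    have h2 := norm_nonneg x
    have h3 : ‖x‖ = 0 := by nlinarith
    exact norm_eq_zero.1 h3
  have hmapmem : ∀ x ∈ W, R x ∈ W2 := fun x hx => Submodule.mem_map_of_mem hx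
  set g : ↥W →ₗ[ℝ] ↥W2 := (R : E →ₗ[ℝ] F).restrict hmapmem with hg
  have hginj : Function.Injective g := by
    intro a b hab
    have h0 : R ((a:E) - (b:E)) = 0 := by
      have : (g a : F) = (g b : F) := by rw [hab]
      simp only [hg, LinearMap.restrict_apply] at this
      rw [map_sub]
      simp only [ContinuousLinearMap.coe_coe] at this ⊢
      rw [this, sub_self]
    have := hRinj _ (W.sub_mem a.2 b.2) h0
    ext
    exact sub_eq_zero.1 this
  have hW2 : ¬ FiniteDimensional ℝ W2 := by
    intro h
    exact hW (FiniteDimensional.of_injective g hginj)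
  refine hT W2 hW2 ⟨c / (‖R‖ + 1), by positivity, ?_⟩
  rintro y hy
  obtain ⟨x, hxW, rfl⟩ := hy
  have h1 : c * ‖x‖ ≤ ‖T (R x)‖ := hlow x hxW
  have h2 : ‖R x‖ ≤ (‖R‖ + 1) * ‖x‖ := by
    refine (R.le_opNorm x).trans ?_
    have := norm_nonneg x
    nlinarith
  simp only [ContinuousLinearMap.coe_coe]
  calc c / (‖R‖ + 1) * ‖R x‖ ≤ c / (‖R‖ + 1) * ((‖R‖ + 1) * ‖x‖) := by
        refine mul_le_mul_of_nonneg_left h2 (by positivity)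
    _ = c * ‖x‖ := by field_simp
    _ ≤ ‖T (R x)‖ := h1

end Main

section BasisAux
variable {X : Type*} [NormedAddCommGroup X] [NormedSpace ℝ X]

lemma coords_inj (b : SchauderBasis' X) {u v : X}
    (h : ∀ i, b.coord i u = b.coord i v) : u = v := by
  have h1 := b.expansion u
  have h2 := b.expansion v
  have : (fun i => b.coord i u • b.e i) = (fun i => b.coord i v • b.e i) := by
    funext i; rw [h i]
  rw [this] at h1
  exact h1.unique h2

lemma coord_diag (b : SchauderBasis' X) (D : X →L[ℝ] X) (lam : ℕ → ℝ)
    (hlam : ∀ i, D (b.e i) = lam i • b.e i) (x : X) (j : ℕ) :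
    b.coord j (D x) = lam j * b.coord j x := by
  have h1 : HasSum (fun i => b.coord i x • D (b.e i)) (D x) := by
    have := (b.expansion x).mapL D
    simpa using this
  have h2 : HasSum (fun i => b.coord j (b.coord i x • D (b.e i))) (b.coord j (D x)) :=
    h1.mapL (b.coord j)
  have h3 : (fun i => b.coord j (b.coord i x • D (b.e i)))
      = fun i => if i = j then lam j * b.coord j x else 0 := by
    funext i
    rw [hlam i, map_smul, map_smul, b.ortho j i]
    by_cases h : i = j
    · subst h; simp [mul_comm]
    · simp [h, Ne.symm h]
  rw [h3] at h2
  exact h2.unique (hasSum_ite_eq j _)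

lemma unconditional_two (b : SchauderBasis' X) {C : ℝ} (hb : b.IsUnconditionalWith C)
    (u w : X) (h : ∀ i, |b.coord i u| ≤ 2 * |b.coord i w|) :
    ‖u‖ ≤ 2 * C * ‖w‖ := by
  have h2 : ∀ i, |b.coord i u| ≤ |b.coord i ((2:ℝ) • w)| := by
    intro i
    rw [map_smul]
    simpa [abs_mul] using h i
  have := hb ((2:ℝ) • w) u h2
  rw [norm_smul] at this
  simpa [mul_comm, mul_assoc, mul_left_comm] using this

lemma basis_C_pos (b : SchauderBasis' X) {C : ℝ} (hb : b.IsUnconditionalWith C) : 0 < C := by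
  have he : b.e 0 ≠ 0 := by
    intro h
    have := b.ortho 0 0
    rw [h, map_zero] at this
    simp at this
  have := hb (b.e 0) (b.e 0) (fun i => le_rfl)
  nlinarith [norm_pos_iff.2 he]

lemma infdim_map {V W : Type*} [AddCommGroup V] [Module ℝ V] [AddCommGroup W] [Module ℝ W]
    (g : V →ₗ[ℝ] W) (hg : Function.Injective g) (p : Submodule ℝ V)
    (hp : ¬ FiniteDimensional ℝ p) : ¬ FiniteDimensional ℝ (p.map g) := by
  intro h
  exact hp ((Submodule.equivMapOfInjective g hg p).symm.finiteDimensional)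

end BasisAux

set_option maxHeartbeats 2000000

/-- characterization of when the projection P_Y on Y + Z is a
strictly singular perturbation of a restriction of a diagonal operator, in
terms of a partition ℕ = F ∪ G with P_G|_Y and P_F|_Z strictly singular;
moreover D can then be chosen to be the coordinate projection P_F. -/
theorem stmt7 {X : Type*} [NormedAddCommGroup X] [NormedSpace ℝ X] [CompleteSpace X]
    (b : SchauderBasis' X) (C : ℝ) (hb : b.IsUnconditionalWith C)
    (P : Set ℕ → (X →L[ℝ] X))
    (hP : ∀ (G : Set ℕ) (x : X) (i : ℕ),
      b.coord i (P G x) = if i ∈ G then b.coord i x else 0)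
    (y z : ℕ → X) (hy : b.IsBlockSequence y) (hz : b.IsBlockSequence z)
    (hD1 : ∀ n i j, (b.coord i (y n) ≠ 0 ∨ b.coord i (z n) ≠ 0) →
      (b.coord j (y (n + 1)) ≠ 0 ∨ b.coord j (z (n + 1)) ≠ 0) → i ≤ j)
    (hD2 : ∃ δ > (0 : ℝ), ∀ u ∈ closedSpan y, ∀ v ∈ closedSpan z,
      ‖u‖ = 1 → ‖v‖ = 1 → δ ≤ ‖u - v‖)
    (Q : ↥(closedSpan y ⊔ closedSpan z) →L[ℝ] X)
    (hQ : ∀ w : ↥(closedSpan y ⊔ closedSpan z), ∀ u ∈ closedSpan y, ∀ v ∈ closedSpan z,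
      (w : X) = u + v → Q w = u) :
    ((∃ (D : X →L[ℝ] X) (S : ↥(closedSpan y ⊔ closedSpan z) →L[ℝ] X),
        b.IsDiagonal D ∧ StrictlySingular S ∧
        Q = D.comp (closedSpan y ⊔ closedSpan z).subtypeL + S) ↔
      (∃ F G : Set ℕ, F ∪ G = Set.univ ∧ F ∩ G = ∅ ∧
        StrictlySingular ((P G).comp (closedSpan y).subtypeL) ∧
        StrictlySingular ((P F).comp (closedSpan z).subtypeL)))
    ∧ (∀ F G : Set ℕ, F ∪ G = Set.univ → F ∩ G = ∅ →
        StrictlySingular ((P G).comp (closedSpan y).subtypeL) →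
        StrictlySingular ((P F).comp (closedSpan z).subtypeL) →
        ∃ S : ↥(closedSpan y ⊔ closedSpan z) →L[ℝ] X, StrictlySingular S ∧
          Q = (P F).comp (closedSpan y ⊔ closedSpan z).subtypeL + S) := by
  have hC : (0:ℝ) < C := basis_C_pos b hb
  -- partition identity
  have hpart : ∀ (F G : Set ℕ), F ∪ G = Set.univ → F ∩ G = ∅ → ∀ x : X,
      P F x + P G x = x := by
    intro F G hun hdis x
    refine coords_inj b (fun i => ?_)
    rw [map_add, hP, hP]
    by_cases hiF : i ∈ F
    · have hiG : i ∉ G := by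
        intro hiG
        have : i ∈ F ∩ G := ⟨hiF, hiG⟩
        rw [hdis] at this
        exact this
      simp [hiF, hiG]
    · have hiG : i ∈ G := by
        have : i ∈ F ∪ G := by rw [hun]; trivial
        exact this.resolve_left hiF
      simp [hiF, hiG]
  -- decomposition of elements of (closedSpan y) ⊔ (closedSpan z)
  have hdecomp : ∀ w : ↥((closedSpan y) ⊔ (closedSpan z)), Q w ∈ (closedSpan y) ∧ (w : X) - Q w ∈ (closedSpan z) := by
    intro w
    obtain ⟨u, hu, v, hv, huv⟩ := Submodule.mem_sup.1 w.2
    have hQw : Q w = u := hQ w u hu v hv huv.symm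
    refine ⟨hQw ▸ hu, ?_⟩
    rw [hQw, ← huv]
    simpa using hv
  -- Part 2
  have part2 : ∀ F G : Set ℕ, F ∪ G = Set.univ → F ∩ G = ∅ →
      StrictlySingular ((P G).comp (closedSpan y).subtypeL) →
      StrictlySingular ((P F).comp (closedSpan z).subtypeL) →
      ∃ S : ↥((closedSpan y) ⊔ (closedSpan z)) →L[ℝ] X, StrictlySingular S ∧
        Q = (P F).comp ((closedSpan y) ⊔ (closedSpan z)).subtypeL + S := by
    intro F G hun hdis hssY hssZ
    have hid := hpart F G hun hdis
    set Qr : ↥((closedSpan y) ⊔ (closedSpan z)) →L[ℝ] ↥(closedSpan y) := Q.codRestrict (closedSpan y) (fun w => (hdecomp w).1) with hQr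
    set Rr : ↥((closedSpan y) ⊔ (closedSpan z)) →L[ℝ] ↥(closedSpan z) :=
      (((closedSpan y) ⊔ (closedSpan z)).subtypeL - Q).codRestrict (closedSpan z) (fun w => by
        simpa using (hdecomp w).2) with hRr
    set A := ((P G).comp (closedSpan y).subtypeL).comp Qr with hA
    set B := ((P F).comp (closedSpan z).subtypeL).comp Rr with hB
    refine ⟨A - B, ss_sub _ _ (ss_comp _ _ hssY) (ss_comp _ _ hssZ), ?_⟩
    ext w
    simp only [hA, hB, ContinuousLinearMap.add_apply, ContinuousLinearMap.sub_apply,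
      ContinuousLinearMap.comp_apply, ContinuousLinearMap.coe_codRestrict_apply,
      Submodule.subtypeL_apply, hQr, hRr, map_sub]
    have h := hid (Q w)
    have h2 : P F (w : X) + (P G (Q w) - (P F (w : X) - P F (Q w)))
        = P F (Q w) + P G (Q w) := by abel
    rw [h2, h]
  constructor
  · constructor
    · -- forward direction
      rintro ⟨D, S, hDdiag, hSss, hQeq⟩
      set lam : ℕ → ℝ := fun i => (hDdiag i).choose with hlamdef
      have hlam : ∀ i, D (b.e i) = lam i • b.e i := fun i => (hDdiag i).choose_spec
      have hcd := coord_diag b D lam hlam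
      refine ⟨{i | (1:ℝ)/2 ≤ |lam i|}, {i | |lam i| < 1/2}, ?_, ?_, ?_, ?_⟩
      · ext i
        simp only [Set.mem_union, Set.mem_setOf_eq, Set.mem_univ, iff_true]
        exact le_or_gt _ _
      · ext i
        simp only [Set.mem_inter_iff, Set.mem_setOf_eq, Set.mem_empty_iff_false, iff_false,
          not_and]
        intro h
        linarith
      · -- P_G strictly singular on (closedSpan y)
        intro Y₀ hY₀
        rintro ⟨c, hc, hlow⟩
        have le1 : (closedSpan y) ≤ (closedSpan y) ⊔ (closedSpan z) := le_sup_left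
        set W := Y₀.map (Submodule.inclusion le1) with hW
        have hWinf := infdim_map _ (Submodule.inclusion_injective le1) Y₀ hY₀
        refine hSss W hWinf ⟨c / (2 * C), by positivity, ?_⟩
        rintro w hw
        obtain ⟨u, hu, rfl⟩ := Submodule.mem_map.1 hw
        set w : ↥((closedSpan y) ⊔ (closedSpan z)) := Submodule.inclusion le1 u with hwdef
        have hcoe : (w : X) = (u : X) := rfl
        have hQw : Q w = (u : X) :=
          hQ w (u : X) u.2 0 (Submodule.zero_mem _) (by rw [hcoe, add_zero])
        have hSw : S w = (u : X) - D (u : X) := by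
          have h := congrArg (fun (T : ↥((closedSpan y) ⊔ (closedSpan z)) →L[ℝ] X) => T w) hQeq
          simp only [ContinuousLinearMap.add_apply, ContinuousLinearMap.comp_apply,
            Submodule.subtypeL_apply] at h
          rw [hQw, hcoe] at h
          rw [eq_sub_iff_add_eq, add_comm]
          exact h.symm
        have hbound : ‖P {i | |lam i| < 1/2} (u : X)‖ ≤ 2 * C * ‖(u : X) - D (u : X)‖ := by
          refine unconditional_two b hb _ _ (fun i => ?_)
          rw [hP]
          split_ifs with hiG
          · have h5 : 1 - |lam i| ≤ |1 - lam i| := by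
              have := abs_sub_abs_le_abs_sub (1:ℝ) (lam i)
              simpa using this
            have hiG' : |lam i| < 1/2 := hiG
            have h6 : b.coord i ((u:X) - D (u:X)) = (1 - lam i) * b.coord i (u:X) := by
              rw [map_sub, hcd]
              ring
            rw [h6, abs_mul]
            nlinarith [abs_nonneg (b.coord i (u:X))]
          · simp only [abs_zero]
            positivity
        have hlowu := hlow u hu
        simp only [ContinuousLinearMap.comp_apply, Submodule.subtypeL_apply] at hlowu
        have hnw : ‖w‖ = ‖u‖ := by
          rw [← Submodule.norm_coe w, hcoe, Submodule.norm_coe]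
        rw [div_mul_eq_mul_div, div_le_iff₀ (by positivity : (0:ℝ) < 2 * C)]
        rw [hSw, hnw]
        calc c * ‖u‖ ≤ ‖P {i | |lam i| < 1/2} (u : X)‖ := hlowu
          _ ≤ 2 * C * ‖(u : X) - D (u : X)‖ := hbound
          _ = ‖(u : X) - D (u : X)‖ * (2 * C) := by ring
      · -- P_F strictly singular on (closedSpan z)
        intro Z₀ hZ₀
        rintro ⟨c, hc, hlow⟩
        have le2 : (closedSpan z) ≤ (closedSpan y) ⊔ (closedSpan z) := le_sup_right
        set W := Z₀.map (Submodule.inclusion le2) with hW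
        have hWinf := infdim_map _ (Submodule.inclusion_injective le2) Z₀ hZ₀
        refine hSss W hWinf ⟨c / (2 * C), by positivity, ?_⟩
        rintro w hw
        obtain ⟨v, hv, rfl⟩ := Submodule.mem_map.1 hw
        set w : ↥((closedSpan y) ⊔ (closedSpan z)) := Submodule.inclusion le2 v with hwdef
        have hcoe : (w : X) = (v : X) := rfl
        have hQw : Q w = 0 :=
          hQ w 0 (Submodule.zero_mem _) (v : X) v.2 (by rw [hcoe, zero_add])
        have hSw : S w = -(D (v : X)) := by
          have h := congrArg (fun (T : ↥((closedSpan y) ⊔ (closedSpan z)) →L[ℝ] X) => T w) hQeq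
          simp only [ContinuousLinearMap.add_apply, ContinuousLinearMap.comp_apply,
            Submodule.subtypeL_apply] at h
          rw [hQw, hcoe] at h
          rw [eq_neg_iff_add_eq_zero, add_comm]
          exact h.symm
        have hbound : ‖P {i | (1:ℝ)/2 ≤ |lam i|} (v : X)‖ ≤ 2 * C * ‖D (v : X)‖ := by
          refine unconditional_two b hb _ _ (fun i => ?_)
          rw [hP]
          split_ifs with hiF
          · have hiF' : (1:ℝ)/2 ≤ |lam i| := hiF
            rw [hcd, abs_mul]
            nlinarith [abs_nonneg (b.coord i (v:X))]
          · simp only [abs_zero]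
            positivity
        have hlowv := hlow v hv
        simp only [ContinuousLinearMap.comp_apply, Submodule.subtypeL_apply] at hlowv
        have hnw : ‖w‖ = ‖v‖ := by
          rw [← Submodule.norm_coe w, hcoe, Submodule.norm_coe]
        rw [div_mul_eq_mul_div, div_le_iff₀ (by positivity : (0:ℝ) < 2 * C)]
        rw [hSw, hnw, norm_neg]
        calc c * ‖v‖ ≤ ‖P {i | (1:ℝ)/2 ≤ |lam i|} (v : X)‖ := hlowv
          _ ≤ 2 * C * ‖D (v : X)‖ := hbound
          _ = ‖D (v : X)‖ * (2 * C) := by ring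
    · -- backward direction
      rintro ⟨F, G, hun, hdis, hssY, hssZ⟩
      obtain ⟨S, hS, hQeq⟩ := part2 F G hun hdis hssY hssZ
      refine ⟨P F, S, ?_, hS, hQeq⟩
      intro i
      by_cases hi : i ∈ F
      · refine ⟨1, coords_inj b (fun j => ?_)⟩
        rw [hP, map_smul]
        split_ifs with hj
        · simp
        · have hne : j ≠ i := fun h => hj (h ▸ hi)
          rw [b.ortho j i]
          simp [hne]
      · refine ⟨0, coords_inj b (fun j => ?_)⟩
        rw [hP, map_smul]
        split_ifs with hj
        · have hne : j ≠ i := fun h => hi (h ▸ hj)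
          rw [b.ortho j i]
          simp [hne]
        · simp
  · exact part2
end

section
/- Let X be a Banach space with a 1-unconditional basis (e_i). Let (y_k) be a block sequence, T: [y_k] → X a bounded linear operator with supp(T y_k) ∩ supp(y_k) = ∅ for all k (diagonal-free). Let x = Σ_{k∈A} a_k y_k be a finite linear combination with A finite, and for B ⊆ A let R_B denote the coordinate projection onto [e_j : j ∈ ∪_{i∈B} supp y_i]. Then R_A T x = (λ/|𝒫|) Σ_{(B,C)∈𝒫} R_B T R_C x, where 𝒫 is the set of balanced ordered partitions of A (|B| = |C| if |A| even, ||B|−|C|| = 1 if |A| odd) and λ = 2L(2L−1)/L² if |A| = 2L, λ = 2(2L+1)/(L+1) if |A| = 2L+1. -/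
open scoped BigOperators Classical
open Filter Topology

section Aux

lemma nat_choose_even (M : ℕ) :
    (M+1)^2 * Nat.choose (2*M+2) (M+1) = (2*M+2)*(2*M+1) * Nat.choose (2*M) M := by
  have h1 := Nat.add_one_mul_choose_eq (2*M+1) M
  have h2 := Nat.add_one_mul_choose_eq (2*M) M
  have h3 : Nat.choose (2*M+1) (M+1) = Nat.choose (2*M+1) M := by
    have := Nat.choose_symm (show M+1 ≤ 2*M+1 by omega) (n := 2*M+1)
    simpa [show 2*M+1-(M+1) = M by omega] using this.symm
  nlinarith [h1, h2, h3]

lemma nat_choose_odd (M : ℕ) :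
    (M+2) * (Nat.choose (2*M+3) (M+1) + Nat.choose (2*M+3) (M+2))
      = 2*(2*M+3) * (Nat.choose (2*M+1) M + Nat.choose (2*M+1) (M+1)) := by
  have h1 := Nat.add_one_mul_choose_eq (2*M+2) (M+1)
  have h3 : Nat.choose (2*M+3) (M+1) = Nat.choose (2*M+3) (M+2) := by
    have := Nat.choose_symm (show M+2 ≤ 2*M+3 by omega) (n := 2*M+3)
    simpa [show 2*M+3-(M+2) = M+1 by omega] using this
  have h4 : Nat.choose (2*M+2) (M+1) = Nat.choose (2*M+1) M + Nat.choose (2*M+1) (M+1) :=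
    Nat.choose_succ_succ (2*M+1) M
  nlinarith [h1]

lemma card_sub1 (A : Finset ℕ) (L : ℕ) {inst : DecidablePred fun B : Finset ℕ => B.card = L} :
    (@Finset.filter _ _ inst A.powerset).card = A.card.choose L := by
  rw [← Finset.card_powersetCard L A]
  congr 1
  ext B
  simp only [Finset.mem_filter, Finset.mem_powerset, Finset.mem_powersetCard]

lemma card_sub2 (A : Finset ℕ) (m k L : ℕ) (hm : m ∈ A) (hk : k ∈ A) (hmk : m ≠ k)
    (hL : 1 ≤ L)
    {inst : DecidablePred fun B : Finset ℕ => B.card = L ∧ m ∈ B ∧ k ∉ B} :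
    (@Finset.filter _ _ inst A.powerset).card
      = (A.card - 2).choose (L - 1) := by
  have hcard : ((A.erase m).erase k).card = A.card - 2 := by
    rw [Finset.card_erase_of_mem (Finset.mem_erase.2 ⟨Ne.symm hmk, hk⟩),
      Finset.card_erase_of_mem hm]
    omega
  rw [← hcard, ← Finset.card_powersetCard]
  refine Finset.card_bij' (fun B _ => B.erase m) (fun B' _ => insert m B') ?hi ?hj ?li ?ri
  case hi =>
    intro B hB
    simp only [Finset.mem_filter, Finset.mem_powerset] at hB
    obtain ⟨hBA, hBc, hmB, hkB⟩ := hB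
    rw [Finset.mem_powersetCard]
    constructor
    · intro j hj
      rw [Finset.mem_erase] at hj
      rw [Finset.mem_erase, Finset.mem_erase]
      exact ⟨fun h => hkB (h ▸ hj.2), hj.1, hBA hj.2⟩
    · rw [Finset.card_erase_of_mem hmB, hBc]
  case hj =>
    intro B' hB'
    rw [Finset.mem_powersetCard] at hB'
    obtain ⟨hsub, hc⟩ := hB'
    have hmB' : m ∉ B' := fun h => by
      have := hsub h; rw [Finset.mem_erase, Finset.mem_erase] at this; exact this.2.1 rfl
    have hkB' : k ∉ B' := fun h => by
      have := hsub h; rw [Finset.mem_erase] at this; exact this.1 rfl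
    simp only [Finset.mem_filter, Finset.mem_powerset]
    refine ⟨?_, ?_, Finset.mem_insert_self _ _, ?_⟩
    · intro j hj
      rcases Finset.mem_insert.1 hj with rfl | hj
      · exact hm
      · have := hsub hj; rw [Finset.mem_erase, Finset.mem_erase] at this; exact this.2.2
    · rw [Finset.card_insert_of_notMem hmB', hc]; omega
    · intro h
      rcases Finset.mem_insert.1 h with rfl | h
      · exact hmk rfl
      · exact hkB' h
  case li =>
    intro B hB
    simp only [Finset.mem_filter] at hB
    exact Finset.insert_erase hB.2.2.1
  case ri =>
    intro B' hB'
    rw [Finset.mem_powersetCard] at hB'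
    have hmB' : m ∉ B' := fun h => by
      have := hB'.1 h; rw [Finset.mem_erase, Finset.mem_erase] at this; exact this.2.1 rfl
    exact Finset.erase_insert hmB'

lemma card_filter_or' {α : Type*} (s : Finset α) (p q : α → Prop)
    [DecidablePred p] [DecidablePred q] {instpq : DecidablePred fun a => p a ∨ q a}
    (h : ∀ a ∈ s, ¬(p a ∧ q a)) :
    (@Finset.filter α _ instpq s).card = (s.filter p).card + (s.filter q).card := by
  rw [← Finset.card_union_of_disjoint]
  · congr 1
    ext a
    simp only [Finset.mem_filter, Finset.mem_union]
    tauto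
  · rw [Finset.disjoint_left]
    intro a h1 h2
    rw [Finset.mem_filter] at h1 h2
    exact h a h1.1 ⟨h1.2, h2.2⟩

lemma filter_card_congr {α : Type*} {s : Finset α} {p q : α → Prop}
    {ip : DecidablePred p} [iq : DecidablePred q] (h : ∀ a ∈ s, p a ↔ q a) :
    (@Finset.filter _ p ip s).card = (s.filter q).card := by
  congr 1
  ext a
  rw [Finset.mem_filter, Finset.mem_filter]
  exact ⟨fun ⟨ha, hp⟩ => ⟨ha, (h a ha).1 hp⟩, fun ⟨ha, hq⟩ => ⟨ha, (h a ha).2 hq⟩⟩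

noncomputable def mkP (A : Finset ℕ) (cond : ℕ → Prop) : Finset (Finset ℕ × Finset ℕ) :=
  (A.powerset ×ˢ A.powerset).filter
    (fun p => p.1 ∪ p.2 = A ∧ Disjoint p.1 p.2 ∧ cond p.1.card)

lemma mem_mkP {A : Finset ℕ} {cond : ℕ → Prop} {p : Finset ℕ × Finset ℕ} :
    p ∈ mkP A cond ↔ p.1 ⊆ A ∧ cond p.1.card ∧ p.2 = A \ p.1 := by
  unfold mkP
  simp only [Finset.mem_filter, Finset.mem_product, Finset.mem_powerset]
  constructor
  · rintro ⟨⟨h1, h2⟩, hu, hd, hc⟩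
    refine ⟨h1, hc, ?_⟩
    rw [← hu, Finset.union_sdiff_cancel_left hd]
  · rintro ⟨h1, hc, h2⟩
    rw [h2]
    exact ⟨⟨h1, Finset.sdiff_subset⟩, Finset.union_sdiff_of_subset h1,
      Finset.disjoint_sdiff, hc⟩

lemma mkP_congr (A : Finset ℕ) (cond cond' : ℕ → Prop) (h : ∀ c, cond c ↔ cond' c) :
    mkP A cond = mkP A cond' := by
  ext p
  rw [mem_mkP, mem_mkP, h p.1.card]

lemma mkP_filter_card (A : Finset ℕ) (cond : ℕ → Prop) (q : Finset ℕ × Finset ℕ → Prop)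
    {inst : DecidablePred q} :
    ((@Finset.filter _ q inst (mkP A cond))).card
      = (A.powerset.filter fun B => cond B.card ∧ q (B, A \ B)).card := by
  refine Finset.card_bij' (fun p _ => p.1) (fun B _ => (B, A \ B)) ?hi ?hj ?li ?ri
  case hi =>
    intro p hp
    rw [Finset.mem_filter] at hp
    obtain ⟨hp1, hq⟩ := hp
    rw [mem_mkP] at hp1
    simp only [Finset.mem_filter, Finset.mem_powerset]
    refine ⟨hp1.1, hp1.2.1, ?_⟩
    have : (p.1, A \ p.1) = p := Prod.ext rfl hp1.2.2.symm
    rw [this]; exact hq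
  case hj =>
    intro B hB
    simp only [Finset.mem_filter, Finset.mem_powerset] at hB
    rw [Finset.mem_filter, mem_mkP]
    exact ⟨⟨hB.1, hB.2.1, rfl⟩, hB.2.2⟩
  case li =>
    intro p hp
    rw [Finset.mem_filter, mem_mkP] at hp
    exact Prod.ext rfl hp.1.2.2.symm
  case ri =>
    intro B hB
    rfl

lemma mkP_card (A : Finset ℕ) (cond : ℕ → Prop) :
    (mkP A cond).card = (A.powerset.filter fun B => cond B.card).card := by
  have := mkP_filter_card A cond (fun _ => True) (inst := fun _ => instDecidableTrue)
  simpa using this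

lemma coord_ext {X : Type*} [NormedAddCommGroup X] [NormedSpace ℝ X]
    (b : SchauderBasis' X) {u v : X} (h : ∀ i, b.coord i u = b.coord i v) : u = v := by
  have h1 := b.expansion u
  simp only [h] at h1
  exact h1.unique (b.expansion v)

end Aux

/-- for a diagonal-free bounded operator T on a block subspace
and x = Σ_{k∈A} a_k y_k, one has R_A T x = (λ/|𝒫|) Σ_{(B,C)∈𝒫} R_B T R_C x,
where 𝒫 is the set of balanced ordered partitions of A. -/
theorem stmt11 {X : Type*} [NormedAddCommGroup X] [NormedSpace ℝ X] [CompleteSpace X]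
    (b : SchauderBasis' X) (hb : b.IsUnconditionalWith 1)
    (y : ℕ → X) (hy : b.IsBlockSequence y)
    (T : ↥(closedSpan y) →L[ℝ] X)
    -- T is diagonal-free: supp(T y_k) ∩ supp(y_k) = ∅
    (hdf : ∀ k (u : ↥(closedSpan y)), (u : X) = y k →
      ∀ i, b.coord i (y k) ≠ 0 → b.coord i (T u) = 0)
    -- R B is the coordinate projection onto [e_j : j ∈ ∪_{m∈B} supp y_m]
    (R : Finset ℕ → (X →L[ℝ] X))
    (hR : ∀ (B : Finset ℕ) (x : X) (i : ℕ),
      b.coord i (R B x) = if ∃ m ∈ B, b.coord i (y m) ≠ 0 then b.coord i x else 0)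
    (A : Finset ℕ) (a : ℕ → ℝ) (L : ℕ)
    -- w B is the element Σ_{k∈B} a_k y_k of the block subspace [yₙ]
    (w : Finset ℕ → ↥(closedSpan y))
    (hw : ∀ B : Finset ℕ, (w B : X) = ∑ k ∈ B, a k • y k)
    (P : Finset (Finset ℕ × Finset ℕ))
    (hP : P = (A.powerset ×ˢ A.powerset).filter
      (fun p => p.1 ∪ p.2 = A ∧ Disjoint p.1 p.2 ∧
        ((A.card % 2 = 0 ∧ p.1.card = A.card / 2) ∨
         (A.card % 2 = 1 ∧ (p.1.card = A.card / 2 ∨ p.1.card = A.card / 2 + 1))))) :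
    (A.card = 2 * L →
      (P.card : ℝ) • R A (T (w A)) =
        ((2 * (L : ℝ) * (2 * (L : ℝ) - 1)) / (L : ℝ) ^ 2) •
          ∑ p ∈ P, R p.1 (T (w p.2)))
    ∧ (A.card = 2 * L + 1 →
      (P.card : ℝ) • R A (T (w A)) =
        ((2 * (2 * (L : ℝ) + 1)) / ((L : ℝ) + 1)) •
          ∑ p ∈ P, R p.1 (T (w p.2))) := by
  classical
  have hwsingle : ∀ k, ((w {k} : X)) = a k • y k := by
    intro k; rw [hw, Finset.sum_singleton]
  have hwsum : ∀ C : Finset ℕ, w C = ∑ k ∈ C, w {k} := by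
    intro C
    rw [← Subtype.coe_inj, hw]
    push_cast
    exact Finset.sum_congr rfl fun k _ => (hwsingle k).symm
  set t : ℕ → ℕ → ℝ := fun i k => b.coord i (T (w {k})) with ht
  have hT0 : ∀ i k, b.coord i (y k) ≠ 0 → t i k = 0 := by
    intro i k hik
    by_cases hak : a k = 0
    · have hw0 : w {k} = 0 := by
        rw [← Subtype.coe_inj, hwsingle k, hak, zero_smul]
        simp
      simp [ht, hw0]
    · set u : ↥(closedSpan y) := (a k)⁻¹ • w {k} with hu
      have hux : (u : X) = y k := by
        rw [hu]
        push_cast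
        rw [hwsingle k, smul_smul, inv_mul_cancel₀ hak, one_smul]
      have h0 := hdf k u hux i hik
      have hwu : w {k} = a k • u := by
        rw [hu, smul_smul, mul_inv_cancel₀ hak, one_smul]
      rw [ht]
      simp only []
      rw [hwu, map_smul, map_smul, smul_eq_mul, h0, mul_zero]
  have huniq : ∀ i m m', b.coord i (y m) ≠ 0 → b.coord i (y m') ≠ 0 → m = m' := by
    intro i m m' h1 h2
    by_contra hne
    rcases Nat.lt_or_ge m m' with hlt | hge
    · exact lt_irrefl i (hy.2.2 m m' i i hlt h1 h2)
    · have hlt : m' < m := by omega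
      exact lt_irrefl i (hy.2.2 m' m i i hlt h2 h1)
  have hTsum : ∀ (i : ℕ) (C : Finset ℕ), b.coord i (T (w C)) = ∑ k ∈ C, t i k := by
    intro i C
    rw [hwsum C, map_sum, map_sum]
  set cond₀ : ℕ → Prop := fun c =>
    (A.card % 2 = 0 ∧ c = A.card / 2) ∨
      (A.card % 2 = 1 ∧ (c = A.card / 2 ∨ c = A.card / 2 + 1)) with hcond₀
  have hPdef : P = mkP A cond₀ := by
    rw [hP]
    ext p
    simp only [mkP, Finset.mem_filter]
    exact Iff.rfl
  have hp1A : ∀ p ∈ P, p.1 ⊆ A := by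
    intro p hp; rw [hPdef, mem_mkP] at hp; exact hp.1
  have hp2A : ∀ p ∈ P, p.2 ⊆ A := by
    intro p hp; rw [hPdef, mem_mkP] at hp; rw [hp.2.2]; exact Finset.sdiff_subset
  have main : ∀ lam : ℝ,
      (∀ m ∈ A, ∀ k ∈ A, m ≠ k →
        (P.card : ℝ) = lam * ((P.filter (fun p => m ∈ p.1 ∧ k ∈ p.2)).card : ℝ)) →
      (P.card : ℝ) • R A (T (w A)) = lam • ∑ p ∈ P, R p.1 (T (w p.2)) := by
    intro lam hcount
    apply coord_ext b
    intro i
    rw [map_smul, map_smul, map_sum]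
    simp only [smul_eq_mul, hR]
    by_cases hex : ∃ m ∈ A, b.coord i (y m) ≠ 0
    · obtain ⟨m, hmA, hm0⟩ := hex
      rw [if_pos ⟨m, hmA, hm0⟩, hTsum i A]
      have hterm : ∀ p ∈ P,
          (if ∃ m' ∈ p.1, b.coord i (y m') ≠ 0 then b.coord i (T (w p.2)) else 0)
            = if m ∈ p.1 then ∑ k ∈ p.2, t i k else 0 := by
        intro p hp
        by_cases hmp : m ∈ p.1
        · rw [if_pos ⟨m, hmp, hm0⟩, if_pos hmp, hTsum i p.2]
        · rw [if_neg, if_neg hmp]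
          rintro ⟨m', hm', h0⟩
          exact hmp ((huniq i m' m h0 hm0) ▸ hm')
      rw [Finset.sum_congr rfl hterm]
      have step1 : ∀ p ∈ P, (if m ∈ p.1 then ∑ k ∈ p.2, t i k else 0)
          = ∑ k ∈ A, (if m ∈ p.1 ∧ k ∈ p.2 then t i k else 0) := by
        intro p hp
        by_cases hmp : m ∈ p.1
        · simp only [hmp, true_and, if_true]
          rw [Finset.sum_ite_mem, Finset.inter_eq_right.2 (hp2A p hp)]
        · simp [hmp]
      rw [Finset.sum_congr rfl step1, Finset.sum_comm]
      have step2 : ∀ k ∈ A,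
          (∑ p ∈ P, if m ∈ p.1 ∧ k ∈ p.2 then t i k else 0)
            = ((P.filter fun p => m ∈ p.1 ∧ k ∈ p.2).card : ℝ) * t i k := by
        intro k hk
        rw [← Finset.sum_filter, Finset.sum_const, nsmul_eq_mul]
      rw [Finset.sum_congr rfl step2, Finset.mul_sum, Finset.mul_sum]
      refine Finset.sum_congr rfl fun k hk => ?_
      by_cases hkm : k = m
      · subst hkm; rw [hT0 i k hm0]; ring
      · rw [hcount m hmA k hk (fun h => hkm h.symm)]; ring
    · rw [if_neg hex, mul_zero]
      have hz : ∀ p ∈ P,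
          (if ∃ m' ∈ p.1, b.coord i (y m') ≠ 0 then b.coord i (T (w p.2)) else 0) = 0 := by
        intro p hp
        rw [if_neg]
        rintro ⟨m', h1, h2⟩
        exact hex ⟨m', hp1A p hp h1, h2⟩
      rw [Finset.sum_congr rfl hz, Finset.sum_const_zero, mul_zero]
  constructor
  · -- even case
    intro hA
    apply main
    intro m hm k hk hmk
    have hL1 : 1 ≤ L := by
      have h2 : 1 < A.card := Finset.one_lt_card.2 ⟨m, hm, k, hk, hmk⟩
      omega
    obtain ⟨M, rfl⟩ : ∃ M, L = M + 1 := ⟨L - 1, by omega⟩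
    have hc : ∀ c, cond₀ c ↔ c = M + 1 := by
      intro c; rw [hcond₀]; simp only; omega
    have hPcard : P.card = (2*M+2).choose (M+1) := by
      rw [hPdef, mkP_congr A cond₀ _ hc, mkP_card, card_sub1, hA,
        show 2*(M+1) = 2*M+2 from by ring]
    have hN : (P.filter fun p => m ∈ p.1 ∧ k ∈ p.2).card = (2*M).choose M := by
      rw [hPdef, mkP_congr A cond₀ _ hc, mkP_filter_card]
      have hiff : ∀ B ∈ A.powerset,
          ((B.card = M + 1 ∧ m ∈ (B, A \ B).1 ∧ k ∈ (B, A \ B).2) ↔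
            (B.card = M + 1 ∧ m ∈ B ∧ k ∉ B)) := by
        intro B hB
        simp only [Finset.mem_sdiff]
        constructor
        · rintro ⟨h1, h2, _, h3⟩; exact ⟨h1, h2, h3⟩
        · rintro ⟨h1, h2, h3⟩; exact ⟨h1, h2, hk, h3⟩
      rw [filter_card_congr hiff, card_sub2 A m k (M+1) hm hk hmk (by omega)]
      simp only [show A.card - 2 = 2*M from by omega, Nat.add_sub_cancel]
    rw [hPcard, hN]
    have hcast : ((M:ℝ)+1)^2 * ((2*M+2).choose (M+1) : ℝ)
        = (2*(M:ℝ)+2)*(2*(M:ℝ)+1) * ((2*M).choose M : ℝ) := by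
      exact_mod_cast nat_choose_even M
    have hpos : ((M:ℝ)+1)^2 ≠ 0 := by positivity
    push_cast
    rw [div_mul_eq_mul_div, eq_div_iff hpos]
    nlinarith [hcast]
  · -- odd case
    intro hA
    apply main
    intro m hm k hk hmk
    have hL1 : 1 ≤ L := by
      have h2 : 1 < A.card := Finset.one_lt_card.2 ⟨m, hm, k, hk, hmk⟩
      omega
    obtain ⟨M, rfl⟩ : ∃ M, L = M + 1 := ⟨L - 1, by omega⟩
    have hc : ∀ c, cond₀ c ↔ (c = M + 1 ∨ c = M + 2) := by
      intro c; rw [hcond₀]; simp only; omega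
    have hPcard : P.card = (2*M+3).choose (M+1) + (2*M+3).choose (M+2) := by
      rw [hPdef, mkP_congr A cond₀ _ hc, mkP_card]
      rw [card_filter_or' A.powerset (fun B => B.card = M + 1) (fun B => B.card = M + 2)
        (fun B _ hB => by omega)]
      rw [card_sub1, card_sub1, hA, show 2*(M+1)+1 = 2*M+3 from by ring]
    have hN : (P.filter fun p => m ∈ p.1 ∧ k ∈ p.2).card
        = (2*M+1).choose M + (2*M+1).choose (M+1) := by
      rw [hPdef, mkP_congr A cond₀ _ hc, mkP_filter_card]
      have hiff : ∀ B ∈ A.powerset,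
          (((B.card = M + 1 ∨ B.card = M + 2) ∧ m ∈ (B, A \ B).1 ∧ k ∈ (B, A \ B).2) ↔
            ((B.card = M + 1 ∧ m ∈ B ∧ k ∉ B) ∨ (B.card = M + 2 ∧ m ∈ B ∧ k ∉ B))) := by
        intro B hB
        simp only [Finset.mem_sdiff]
        constructor
        · rintro ⟨h1 | h1, h2, _, h3⟩
          · exact Or.inl ⟨h1, h2, h3⟩
          · exact Or.inr ⟨h1, h2, h3⟩
        · rintro (⟨h1, h2, h3⟩ | ⟨h1, h2, h3⟩)
          · exact ⟨Or.inl h1, h2, hk, h3⟩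
          · exact ⟨Or.inr h1, h2, hk, h3⟩
      rw [filter_card_congr hiff, card_filter_or' A.powerset
        (fun B => B.card = M + 1 ∧ m ∈ B ∧ k ∉ B) (fun B => B.card = M + 2 ∧ m ∈ B ∧ k ∉ B)
        (fun B _ hB => by omega)]
      rw [card_sub2 A m k (M+1) hm hk hmk (by omega),
        card_sub2 A m k (M+2) hm hk hmk (by omega)]
      simp only [show A.card - 2 = 2*M+1 from by omega, Nat.add_sub_cancel,
        show M+2-1 = M+1 from rfl]
    rw [hPcard, hN]
    have hcast : ((M:ℝ)+2) * (((2*M+3).choose (M+1) : ℝ) + ((2*M+3).choose (M+2) : ℝ))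
        = 2*(2*(M:ℝ)+3) * (((2*M+1).choose M : ℝ) + ((2*M+1).choose (M+1) : ℝ)) := by
      exact_mod_cast nat_choose_odd M
    have hpos : ((M:ℝ)+1)+1 ≠ 0 := by positivity
    push_cast
    rw [div_mul_eq_mul_div, eq_div_iff hpos]
    nlinarith [hcast]
end
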